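/- arXiv:1604.06839 — 4 statements merged into one kernel-verified Lean document; each statement's English description precedes it below -/
import Mathlib

section
/- Let c̄ : ℝ → ℝ be the extended middle-λ Cantor function (equal to 0 for x < 0, the middle-λ Cantor function c on [0,1], and 1 for x > 1). Then c̄ is subadditive: c̄(x + y) ≤ c̄(x) + c̄(y) for all x, y ∈ ℝ with x, y ≥ 0. -/
open Set

/-- The map `H` on bounded functions defining the middle-`l` Cantor function. -/
noncomputable def cantorMap (l : ℝ) (g : ℝ → ℝ) : ℝ → ℝ := fun x =>
  if x < (1 - l) / 2 then (1 / 2) * g (2 / (1 - l) * x)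
  else if x < (1 + l) / 2 then 1 / 2
  else 1 / 2 + (1 / 2) * g (2 / (1 - l) * x - (1 + l) / (1 - l))

/-- The iterates of the middle-`l` Cantor recursion starting from `c₀`. -/
noncomputable def cantorSeq (l : ℝ) (c0 : ℝ → ℝ) : ℕ → ℝ → ℝ
  | 0 => c0
  | n + 1 => cantorMap l (cantorSeq l c0 n)

/-- Extension of a function on `[0,1]` by `0` to the left of `0` and `1` to the right of `1`. -/
noncomputable def extendUnit (c : ℝ → ℝ) : ℝ → ℝ := fun x =>
  if x < 0 then 0 else if x ≤ 1 then c x else 1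

private lemma limit_le {u v M : ℝ} (h : ∀ n : ℕ, u ≤ v + M / 2 ^ n) : u ≤ v := by
  by_contra hlt
  push_neg at hlt
  rcases le_or_gt M 0 with hM | hM
  · have h0 := h 0
    norm_num at h0
    linarith
  · obtain ⟨n, hn⟩ := exists_pow_lt_of_lt_one
      (show (0:ℝ) < (u - v)/M from div_pos (by linarith) hM) (show (1:ℝ)/2 < 1 by norm_num)
    have h2 : ((1:ℝ)/2)^n = 1/2^n := by rw [div_pow, one_pow]
    rw [h2] at hn
    have h2n : (0:ℝ) < 2^n := by positivity
    have hmul := mul_lt_mul_of_pos_left hn hM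
    rw [mul_div_cancel₀ _ (ne_of_gt hM), mul_one_div] at hmul
    have := h n
    linarith

private lemma cm_diff {l : ℝ} (hl : l ∈ Set.Ioo (0:ℝ) 1) {g g' : ℝ → ℝ} {K : ℝ} (hK : 0 ≤ K)
    (h : ∀ z ∈ Set.Icc (0:ℝ) 1, |g z - g' z| ≤ K) :
    ∀ x ∈ Set.Icc (0:ℝ) 1, |cantorMap l g x - cantorMap l g' x| ≤ K / 2 := by
  obtain ⟨hl0, hl1⟩ := hl
  have h1l : (0:ℝ) < 1 - l := by linarith
  have h2pos : (0:ℝ) < 2/(1-l) := by positivity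
  intro x hx
  obtain ⟨hx0, hx1⟩ := hx
  unfold cantorMap
  split_ifs with h1 h2
  · have hz : 2/(1-l)*x ∈ Set.Icc (0:ℝ) 1 := by
      constructor
      · exact mul_nonneg h2pos.le hx0
      · rw [div_mul_eq_mul_div, div_le_one h1l]; linarith
    have hd := h _ hz
    have e : 1/2 * g (2/(1-l)*x) - 1/2 * g' (2/(1-l)*x)
        = (g (2/(1-l)*x) - g' (2/(1-l)*x))/2 := by ring
    rw [e, abs_div, abs_two]
    linarith
  · simp only [sub_self, abs_zero]
    positivity
  · have hz : 2/(1-l)*x - (1+l)/(1-l) ∈ Set.Icc (0:ℝ) 1 := by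
      have he : 2/(1-l)*x - (1+l)/(1-l) = (2*x - (1+l))/(1-l) := by ring
      rw [he]
      constructor
      · apply div_nonneg _ h1l.le
        push_neg at h2
        linarith
      · rw [div_le_one h1l]; linarith
    have hd := h _ hz
    have e : 1/2 + 1/2 * g (2/(1-l)*x - (1+l)/(1-l)) - (1/2 + 1/2 * g' (2/(1-l)*x - (1+l)/(1-l)))
        = (g (2/(1-l)*x - (1+l)/(1-l)) - g' (2/(1-l)*x - (1+l)/(1-l)))/2 := by ring
    rw [e, abs_div, abs_two]
    linarith
private lemma seq_mem {l : ℝ} (hl : l ∈ Set.Ioo (0:ℝ) 1) :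
    ∀ n, ∀ x ∈ Set.Icc (0:ℝ) 1, cantorSeq l (fun _ => 0) n x ∈ Set.Icc (0:ℝ) 1 := by
  intro n
  induction n with
  | zero => intro x _; simp [cantorSeq]
  | succ n ih =>
    intro x hx
    obtain ⟨hl0, hl1⟩ := hl
    have h1l : (0:ℝ) < 1 - l := by linarith
    have h2pos : (0:ℝ) < 2/(1-l) := by positivity
    obtain ⟨hx0, hx1⟩ := hx
    show cantorMap l (cantorSeq l (fun _ => 0) n) x ∈ Set.Icc (0:ℝ) 1
    unfold cantorMap
    split_ifs with h1 h2
    · have hz : 2/(1-l)*x ∈ Set.Icc (0:ℝ) 1 :=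
        ⟨mul_nonneg h2pos.le hx0, by rw [div_mul_eq_mul_div, div_le_one h1l]; linarith⟩
      have := ih _ hz
      constructor <;> [linarith [this.1]; linarith [this.2]]
    · constructor <;> norm_num
    · have hz : 2/(1-l)*x - (1+l)/(1-l) ∈ Set.Icc (0:ℝ) 1 := by
        have he : 2/(1-l)*x - (1+l)/(1-l) = (2*x - (1+l))/(1-l) := by ring
        rw [he]
        push_neg at h2
        exact ⟨div_nonneg (by linarith) h1l.le, by rw [div_le_one h1l]; linarith⟩
      have := ih _ hz
      constructor <;> [linarith [this.1]; linarith [this.2]]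

private lemma seq_mono {l : ℝ} (hl : l ∈ Set.Ioo (0:ℝ) 1) :
    ∀ n, ∀ x ∈ Set.Icc (0:ℝ) 1, ∀ y ∈ Set.Icc (0:ℝ) 1, x ≤ y →
      cantorSeq l (fun _ => 0) n x ≤ cantorSeq l (fun _ => 0) n y := by
  intro n
  induction n with
  | zero => intro x _ y _ _; simp [cantorSeq]
  | succ n ih =>
    intro x hx y hy hxy
    obtain ⟨hl0, hl1⟩ := hl
    have h1l : (0:ℝ) < 1 - l := by linarith
    have h2pos : (0:ℝ) < 2/(1-l) := by positivity
    obtain ⟨hx0, hx1⟩ := hx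
    obtain ⟨hy0, hy1⟩ := hy
    have hmemx : ∀ t : ℝ, 0 ≤ t → t < (1-l)/2 → 2/(1-l)*t ∈ Set.Icc (0:ℝ) 1 := by
      intro t h0 h1
      exact ⟨mul_nonneg h2pos.le h0, by rw [div_mul_eq_mul_div, div_le_one h1l]; linarith⟩
    have hmemz : ∀ t : ℝ, (1+l)/2 ≤ t → t ≤ 1 → 2/(1-l)*t - (1+l)/(1-l) ∈ Set.Icc (0:ℝ) 1 := by
      intro t h0 h1
      have he : 2/(1-l)*t - (1+l)/(1-l) = (2*t - (1+l))/(1-l) := by ring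
      rw [he]
      exact ⟨div_nonneg (by linarith) h1l.le, by rw [div_le_one h1l]; linarith⟩
    show cantorMap l (cantorSeq l (fun _ => 0) n) x ≤ cantorMap l (cantorSeq l (fun _ => 0) n) y
    unfold cantorMap
    rcases lt_or_ge x ((1-l)/2) with hxa | hxa
    · rw [if_pos hxa]
      rcases lt_or_ge y ((1-l)/2) with hya | hya
      · rw [if_pos hya]
        have := ih _ (hmemx x hx0 hxa) _ (hmemx y hy0 hya) (by nlinarith)
        linarith
      · rw [if_neg (not_lt.mpr hya)]
        rcases lt_or_ge y ((1+l)/2) with hyb | hyb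
        · rw [if_pos hyb]
          have := (seq_mem ⟨hl0, hl1⟩ n _ (hmemx x hx0 hxa)).2
          linarith
        · rw [if_neg (not_lt.mpr hyb)]
          have h1 := (seq_mem ⟨hl0, hl1⟩ n _ (hmemx x hx0 hxa)).2
          have h2 := (seq_mem ⟨hl0, hl1⟩ n _ (hmemz y hyb hy1)).1
          linarith
    · rw [if_neg (not_lt.mpr hxa)]
      have hya : ¬ y < (1-l)/2 := not_lt.mpr (by linarith)
      rw [if_neg hya]
      rcases lt_or_ge x ((1+l)/2) with hxb | hxb
      · rw [if_pos hxb]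
        rcases lt_or_ge y ((1+l)/2) with hyb | hyb
        · rw [if_pos hyb]
        · rw [if_neg (not_lt.mpr hyb)]
          have h2 := (seq_mem ⟨hl0, hl1⟩ n _ (hmemz y hyb hy1)).1
          linarith
      · rw [if_neg (not_lt.mpr hxb)]
        have hyb : ¬ y < (1+l)/2 := not_lt.mpr (by linarith)
        rw [if_neg hyb]
        have := ih _ (hmemz x hxb hx1) _ (hmemz y (by linarith) hy1) (by nlinarith)
        linarith
private lemma c_approx {l : ℝ} (hl : l ∈ Set.Ioo (0:ℝ) 1) {c : ℝ → ℝ} {M : ℝ}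
    (hM : ∀ x ∈ Set.Icc (0:ℝ) 1, |c x| ≤ M)
    (hc : ∀ x ∈ Set.Icc (0:ℝ) 1, c x = cantorMap l c x) :
    ∀ n, ∀ x ∈ Set.Icc (0:ℝ) 1, |c x - cantorSeq l (fun _ => 0) n x| ≤ M / 2 ^ n := by
  intro n
  induction n with
  | zero =>
    intro x hx
    simpa [cantorSeq] using hM x hx
  | succ n ih =>
    have hM0 : 0 ≤ M := le_trans (abs_nonneg _) (hM 0 ⟨le_refl _, zero_le_one⟩)
    have hK : (0:ℝ) ≤ M / 2^n := by positivity
    intro x hx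
    rw [hc x hx]
    show |cantorMap l c x - cantorMap l (cantorSeq l (fun _ => 0) n) x| ≤ M / 2 ^ (n+1)
    have := cm_diff hl hK ih x hx
    calc |cantorMap l c x - cantorMap l (cantorSeq l (fun _ => 0) n) x| ≤ M / 2^n / 2 := this
      _ = M / 2^(n+1) := by rw [pow_succ]; ring

private lemma c_mem {l : ℝ} (hl : l ∈ Set.Ioo (0:ℝ) 1) {c : ℝ → ℝ}
    (hcb : ∃ M, ∀ x ∈ Set.Icc (0:ℝ) 1, |c x| ≤ M)
    (hc : ∀ x ∈ Set.Icc (0:ℝ) 1, c x = cantorMap l c x) :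
    ∀ x ∈ Set.Icc (0:ℝ) 1, 0 ≤ c x ∧ c x ≤ 1 := by
  obtain ⟨M, hM⟩ := hcb
  intro x hx
  have h1 : ∀ n : ℕ, c x ≤ 1 + M / 2^n := by
    intro n
    have h := c_approx hl hM hc n x hx
    have h2 := (seq_mem hl n x hx).2
    have := abs_le.mp h
    linarith [this.2]
  have h2 : ∀ n : ℕ, -(c x) ≤ 0 + M / 2^n := by
    intro n
    have h := c_approx hl hM hc n x hx
    have h2 := (seq_mem hl n x hx).1
    have := abs_le.mp h
    linarith [this.1]
  exact ⟨by linarith [limit_le h2], by linarith [limit_le (fun n => by linarith [h1 n] : ∀ n : ℕ, c x ≤ 1 + M / 2^n)]⟩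

private lemma c_mono {l : ℝ} (hl : l ∈ Set.Ioo (0:ℝ) 1) {c : ℝ → ℝ}
    (hcb : ∃ M, ∀ x ∈ Set.Icc (0:ℝ) 1, |c x| ≤ M)
    (hc : ∀ x ∈ Set.Icc (0:ℝ) 1, c x = cantorMap l c x) :
    ∀ x ∈ Set.Icc (0:ℝ) 1, ∀ y ∈ Set.Icc (0:ℝ) 1, x ≤ y → c x ≤ c y := by
  obtain ⟨M, hM⟩ := hcb
  intro x hx y hy hxy
  have key : ∀ n : ℕ, c x ≤ c y + (2*M) / 2^n := by
    intro n
    have h1 := abs_le.mp (c_approx hl hM hc n x hx)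
    have h2 := abs_le.mp (c_approx hl hM hc n y hy)
    have h3 := seq_mono hl n x hx y hy hxy
    have e : (2*M)/2^n = M/2^n + M/2^n := by ring
    linarith [h1.2, h2.1]
  exact limit_le key

private lemma c_zero {l : ℝ} (hl : l ∈ Set.Ioo (0:ℝ) 1) {c : ℝ → ℝ}
    (hc : ∀ x ∈ Set.Icc (0:ℝ) 1, c x = cantorMap l c x) : c 0 = 0 := by
  have h := hc 0 ⟨le_refl _, zero_le_one⟩
  rw [cantorMap] at h
  rw [if_pos (by linarith [hl.2] : (0:ℝ) < (1-l)/2)] at h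
  rw [mul_zero] at h
  linarith

private lemma c_one {l : ℝ} (hl : l ∈ Set.Ioo (0:ℝ) 1) {c : ℝ → ℝ}
    (hc : ∀ x ∈ Set.Icc (0:ℝ) 1, c x = cantorMap l c x) : c 1 = 1 := by
  obtain ⟨hl0, hl1⟩ := hl
  have h1l : (0:ℝ) < 1 - l := by linarith
  have h := hc 1 ⟨zero_le_one, le_refl _⟩
  rw [cantorMap] at h
  rw [if_neg (not_lt.mpr (by linarith : (1-l)/2 ≤ 1)),
      if_neg (not_lt.mpr (by linarith : (1+l)/2 ≤ 1))] at h
  have e : 2/(1-l)*1 - (1+l)/(1-l) = 1 := by field_simp; ring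
  rw [e] at h
  linarith

private lemma fixed_unique {l : ℝ} (hl : l ∈ Set.Ioo (0:ℝ) 1) {c c' : ℝ → ℝ}
    (hcb : ∃ M, ∀ x ∈ Set.Icc (0:ℝ) 1, |c x| ≤ M)
    (hc : ∀ x ∈ Set.Icc (0:ℝ) 1, c x = cantorMap l c x)
    (hcb' : ∃ M, ∀ x ∈ Set.Icc (0:ℝ) 1, |c' x| ≤ M)
    (hc' : ∀ x ∈ Set.Icc (0:ℝ) 1, c' x = cantorMap l c' x) :
    ∀ x ∈ Set.Icc (0:ℝ) 1, c x = c' x := by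
  obtain ⟨M, hM⟩ := hcb
  obtain ⟨M', hM'⟩ := hcb'
  have key : ∀ n : ℕ, ∀ x ∈ Set.Icc (0:ℝ) 1, |c x - c' x| ≤ (M + M') / 2^n := by
    intro n
    induction n with
    | zero =>
      intro x hx
      have h1 := abs_add_le (c x) (-(c' x))
      rw [abs_neg] at h1
      have h2 := hM x hx
      have h3 := hM' x hx
      simpa [sub_eq_add_neg] using le_trans h1 (by linarith)
    | succ n ih =>
      intro x hx
      have hK : (0:ℝ) ≤ (M + M')/2^n :=
        le_trans (abs_nonneg _) (ih 0 ⟨le_refl _, zero_le_one⟩)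
      rw [hc x hx, hc' x hx]
      calc |cantorMap l c x - cantorMap l c' x| ≤ (M+M')/2^n/2 := cm_diff hl hK ih x hx
        _ = (M+M')/2^(n+1) := by rw [pow_succ]; ring
  intro x hx
  have h : ∀ n : ℕ, |c x - c' x| ≤ 0 + (M+M') / 2^n := by
    intro n; simpa using key n x hx
  have := limit_le h
  have h0 := abs_nonneg (c x - c' x)
  have : |c x - c' x| = 0 := le_antisymm this h0
  have := abs_eq_zero.mp this
  linarith [sub_eq_zero.mp this]
private lemma c_symm {l : ℝ} (hl : l ∈ Set.Ioo (0:ℝ) 1) {c : ℝ → ℝ}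
    (hcb : ∃ M, ∀ x ∈ Set.Icc (0:ℝ) 1, |c x| ≤ M)
    (hc : ∀ x ∈ Set.Icc (0:ℝ) 1, c x = cantorMap l c x) :
    ∀ x ∈ Set.Icc (0:ℝ) 1, c (1-x) = 1 - c x := by
  obtain ⟨hl0, hl1⟩ := hl
  have h1l : (0:ℝ) < 1 - l := by linarith
  have hne : (1:ℝ) - l ≠ 0 := ne_of_gt h1l
  have hc0 := c_zero ⟨hl0, hl1⟩ hc
  have hc1 := c_one ⟨hl0, hl1⟩ hc
  have hcb' : ∃ M, ∀ x ∈ Set.Icc (0:ℝ) 1, |(fun t => 1 - c (1 - t)) x| ≤ M := by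
    obtain ⟨M, hM⟩ := hcb
    refine ⟨1 + M, fun x hx => ?_⟩
    have h1x : 1 - x ∈ Set.Icc (0:ℝ) 1 := ⟨by linarith [hx.2], by linarith [hx.1]⟩
    have h2 := hM _ h1x
    have h3 := abs_add_le (1:ℝ) (-(c (1-x)))
    rw [abs_neg, abs_one] at h3
    show |1 - c (1-x)| ≤ 1 + M
    rw [sub_eq_add_neg]
    linarith
  have hfix' : ∀ x ∈ Set.Icc (0:ℝ) 1,
      (fun t => 1 - c (1 - t)) x = cantorMap l (fun t => 1 - c (1 - t)) x := by
    intro x hx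
    obtain ⟨hx0, hx1⟩ := hx
    unfold cantorMap
    rcases lt_or_ge x ((1-l)/2) with hxa | hxa
    · rw [if_pos hxa]
      have h1 := hc (1-x) ⟨by linarith, by linarith⟩
      rw [cantorMap, if_neg (not_lt.mpr (by linarith : (1-l)/2 ≤ 1-x)),
          if_neg (not_lt.mpr (by linarith : (1+l)/2 ≤ 1-x))] at h1
      have e : 2/(1-l)*(1-x) - (1+l)/(1-l) = 1 - 2/(1-l)*x := by field_simp; ring
      rw [e] at h1
      show 1 - c (1-x) = 1/2 * (1 - c (1 - 2/(1-l)*x))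
      rw [h1]; ring
    · rw [if_neg (not_lt.mpr hxa)]
      rcases lt_or_ge x ((1+l)/2) with hxb | hxb
      · rw [if_pos hxb]
        show 1 - c (1-x) = 1/2
        have h1 := hc (1-x) ⟨by linarith, by linarith⟩
        rcases lt_or_ge (1-x) ((1+l)/2) with h2 | h2
        · rw [cantorMap, if_neg (not_lt.mpr (by linarith : (1-l)/2 ≤ 1-x)), if_pos h2] at h1
          rw [h1]; norm_num
        · have hxeq : x = (1-l)/2 := by linarith
          rw [cantorMap, if_neg (not_lt.mpr (by linarith : (1-l)/2 ≤ 1-x)),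
              if_neg (not_lt.mpr h2)] at h1
          have e : 2/(1-l)*(1-x) - (1+l)/(1-l) = 0 := by rw [hxeq]; field_simp; ring
          rw [e, hc0] at h1
          rw [h1]; norm_num
      · rw [if_neg (not_lt.mpr hxb)]
        show 1 - c (1-x) = 1/2 + 1/2 * (1 - c (1 - (2/(1-l)*x - (1+l)/(1-l))))
        have h1 := hc (1-x) ⟨by linarith, by linarith⟩
        rcases lt_or_ge (1-x) ((1-l)/2) with h2 | h2
        · rw [cantorMap, if_pos h2] at h1
          have e : 1 - (2/(1-l)*x - (1+l)/(1-l)) = 2/(1-l)*(1-x) := by field_simp; ring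
          rw [e, h1]; ring
        · have hxeq : x = (1+l)/2 := by linarith
          rw [cantorMap, if_neg (not_lt.mpr h2),
              if_pos (by linarith : 1-x < (1+l)/2)] at h1
          have e : 1 - (2/(1-l)*x - (1+l)/(1-l)) = 1 := by rw [hxeq]; field_simp; ring
          rw [e, hc1, h1]; norm_num
  intro x hx
  have h := fixed_unique ⟨hl0, hl1⟩ hcb hc hcb' hfix' x hx
  linarith [h]


set_option maxHeartbeats 1000000 in
private lemma cantor_Pstep {l : ℝ} (hl0 : 0 < l) (hl1 : l < 1) {F : ℝ → ℝ} {ε : ℝ} (hε0 : 0 ≤ ε)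
    (hFone : ∀ x : ℝ, 1 ≤ x → F x = 1)
    (hFmem : ∀ x : ℝ, 0 ≤ F x ∧ F x ≤ 1)
    (hFmono : ∀ x y : ℝ, x ≤ y → F x ≤ F y)
    (hS1 : ∀ x : ℝ, 0 ≤ x → x ≤ (1-l)/2 → F x = F (2/(1-l)*x)/2)
    (hS2 : ∀ x : ℝ, (1+l)/2 ≤ x → x ≤ 1 → F x = 1/2 + F (2/(1-l)*x - (1+l)/(1-l))/2)
    (hMid : ∀ x : ℝ, (1-l)/2 ≤ x → x ≤ (1+l)/2 → F x = 1/2)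
    (hSym : ∀ x : ℝ, 0 ≤ x → x ≤ 1 → F (1-x) = 1 - F x)
    (Pn : ∀ x y : ℝ, 0 ≤ x → 0 ≤ y → F (x+y) ≤ F x + F y + ε)
    (Rn : ∀ p w g : ℝ, 0 ≤ p → 0 ≤ w → 2*l/(1-l) ≤ g → p+w+g ≤ 1 →
      F p + F w ≤ F (p+w+g) + ε) :
    ∀ x y : ℝ, 0 ≤ x → 0 ≤ y → F (x+y) ≤ F x + F y + ε/2 := by
  have h1l : (0:ℝ) < 1 - l := by linarith
  have h2pos : (0:ℝ) < 2/(1-l) := by positivity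
  have hscale : ∀ u v : ℝ, u ≤ v → 2/(1-l)*u ≤ 2/(1-l)*v :=
    fun u v h => mul_le_mul_of_nonneg_left h h2pos.le
  have hainv : 2/(1-l) * ((1-l)/2) = 1 := by field_simp
  have hbinv : 2/(1-l) * ((1+l)/2) = (1+l)/(1-l) := by ring
  have Pstep : ∀ x y : ℝ, 0 ≤ x → x ≤ y → F (x+y) ≤ F x + F y + ε/2 := by
    intro x y hx hxy
    have hy : 0 ≤ y := le_trans hx hxy
    rcases le_or_gt 1 (x+y) with hs1 | hs1
    · have hFs := (hFmem (x+y)).2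
      rcases le_or_gt 1 x with hx1 | hx1
      · rw [hFone x hx1]
        have := (hFmem y).1
        linarith
      · have h1x : F (1-x) = 1 - F x := hSym x hx hx1.le
        have h2 : F (1-x) ≤ F y := hFmono _ _ (by linarith)
        linarith
    rcases le_or_gt (x+y) ((1-l)/2) with hsa | hsa
    · have hxa : x ≤ (1-l)/2 := by linarith
      have hya : y ≤ (1-l)/2 := by linarith
      rw [hS1 x hx hxa, hS1 y hy hya, hS1 (x+y) (by linarith) hsa]
      rw [show 2/(1-l)*(x+y) = 2/(1-l)*x + 2/(1-l)*y from by ring]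
      have hP := Pn (2/(1-l)*x) (2/(1-l)*y)
        (mul_nonneg h2pos.le hx) (mul_nonneg h2pos.le hy)
      linarith
    rcases lt_or_ge (x+y) ((1+l)/2) with hsb | hsb
    · rw [hMid (x+y) hsa.le hsb.le]
      rcases le_or_gt ((1-l)/2) y with hya | hya
      · have h2 : F ((1-l)/2) = 1/2 := hMid _ le_rfl (by linarith)
        have h3 : F ((1-l)/2) ≤ F y := hFmono _ _ hya
        have := (hFmem x).1
        linarith
      · have hxa : x ≤ (1-l)/2 := by linarith
        rw [hS1 x hx hxa, hS1 y hy hya.le]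
        have hP := Pn (2/(1-l)*x) (2/(1-l)*y)
          (mul_nonneg h2pos.le hx) (mul_nonneg h2pos.le hy)
        have hge : (1:ℝ) ≤ 2/(1-l)*x + 2/(1-l)*y := by
          have h4 := hscale ((1-l)/2) (x+y) hsa.le
          rw [hainv] at h4
          nlinarith
        rw [hFone _ hge] at hP
        linarith
    · rw [hS2 (x+y) hsb hs1.le]
      rcases le_or_gt ((1+l)/2) y with hyb | hyb
      · have hy1 : y ≤ 1 := by linarith
        rw [hS2 y hyb hy1]
        have hxa : x ≤ (1-l)/2 := by linarith
        rw [hS1 x hx hxa]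
        have hzy0 : 0 ≤ 2/(1-l)*y - (1+l)/(1-l) := by
          have h4 := hscale ((1+l)/2) y hyb
          rw [hbinv] at h4
          linarith
        have hP := Pn (2/(1-l)*y - (1+l)/(1-l)) (2/(1-l)*x) hzy0
          (mul_nonneg h2pos.le hx)
        rw [show (2/(1-l)*y - (1+l)/(1-l)) + 2/(1-l)*x
            = 2/(1-l)*(x+y) - (1+l)/(1-l) from by ring] at hP
        linarith
      rcases le_or_gt ((1-l)/2) y with hya | hya
      · rw [hMid y hya hyb.le]
        rcases le_or_gt x ((1-l)/2) with hxa | hxa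
        · rw [hS1 x hx hxa]
          have hle : 2/(1-l)*(x+y) - (1+l)/(1-l) ≤ 2/(1-l)*x := by
            have h4 := hscale (x+y-(1+l)/2) x (by linarith)
            rw [mul_sub, hbinv] at h4
            exact h4
          have h5 := hFmono _ _ hle
          linarith
        · have hfx : F ((1-l)/2) ≤ F x := hFmono _ _ hxa.le
          rw [hMid ((1-l)/2) le_rfl (by linarith)] at hfx
          have h5 := (hFmem (2/(1-l)*(x+y) - (1+l)/(1-l))).2
          linarith
      · have hxa : x ≤ (1-l)/2 := by linarith
        rw [hS1 x hx hxa, hS1 y hy hya.le]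
        have hu1 : 2/(1-l)*x ≤ 1 := by
          have h4 := hscale x ((1-l)/2) hxa
          rw [hainv] at h4
          exact h4
        have hv1 : 2/(1-l)*y ≤ 1 := by
          have h4 := hscale y ((1-l)/2) hya.le
          rw [hainv] at h4
          exact h4
        have hsymu : F (1 - 2/(1-l)*x) = 1 - F (2/(1-l)*x) :=
          hSym _ (mul_nonneg h2pos.le hx) hu1
        have hW0 : 0 ≤ 2/(1-l)*(x+y) - (1+l)/(1-l) := by
          have h4 := hscale ((1+l)/2) (x+y) hsb
          rw [hbinv] at h4
          linarith
        have esum : (1 - 2/(1-l)*x) + (2/(1-l)*(x+y) - (1+l)/(1-l)) + 2*l/(1-l)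
            = 2/(1-l)*y := by
          field_simp
          ring
        have hR := Rn (1 - 2/(1-l)*x) (2/(1-l)*(x+y) - (1+l)/(1-l)) (2*l/(1-l))
          (by linarith) hW0 le_rfl (by rw [esum]; exact hv1)
        rw [esum, hsymu] at hR
        linarith
  intro x y hx hy
  rcases le_total x y with h | h
  · exact Pstep x y hx h
  · have h2 := Pstep y x hy h
    rw [add_comm y x] at h2
    linarith


set_option maxHeartbeats 1000000 in
private lemma cantor_Rstep {l : ℝ} (hl0 : 0 < l) (hl1 : l < 1) {F : ℝ → ℝ} {ε : ℝ} (hε0 : 0 ≤ ε)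
    (hFone : ∀ x : ℝ, 1 ≤ x → F x = 1)
    (hFmem : ∀ x : ℝ, 0 ≤ F x ∧ F x ≤ 1)
    (hFmono : ∀ x y : ℝ, x ≤ y → F x ≤ F y)
    (hS1 : ∀ x : ℝ, 0 ≤ x → x ≤ (1-l)/2 → F x = F (2/(1-l)*x)/2)
    (hS2 : ∀ x : ℝ, (1+l)/2 ≤ x → x ≤ 1 → F x = 1/2 + F (2/(1-l)*x - (1+l)/(1-l))/2)
    (hMid : ∀ x : ℝ, (1-l)/2 ≤ x → x ≤ (1+l)/2 → F x = 1/2)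
    (hSym : ∀ x : ℝ, 0 ≤ x → x ≤ 1 → F (1-x) = 1 - F x)
    (Pn : ∀ x y : ℝ, 0 ≤ x → 0 ≤ y → F (x+y) ≤ F x + F y + ε)
    (Rn : ∀ p w g : ℝ, 0 ≤ p → 0 ≤ w → 2*l/(1-l) ≤ g → p+w+g ≤ 1 →
      F p + F w ≤ F (p+w+g) + ε) :
    ∀ p w g : ℝ, 0 ≤ p → 0 ≤ w → 2*l/(1-l) ≤ g → p+w+g ≤ 1 →
      F p + F w ≤ F (p+w+g) + ε/2 := by
  have h1l : (0:ℝ) < 1 - l := by linarith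
  have h2pos : (0:ℝ) < 2/(1-l) := by positivity
  have hscale : ∀ u v : ℝ, u ≤ v → 2/(1-l)*u ≤ 2/(1-l)*v :=
    fun u v h => mul_le_mul_of_nonneg_left h h2pos.le
  have hainv : 2/(1-l) * ((1-l)/2) = 1 := by field_simp
  have hbinv : 2/(1-l) * ((1+l)/2) = (1+l)/(1-l) := by ring
  have hL : ∀ p w : ℝ, 0 ≤ p → 0 ≤ w → p + w ≤ 1 → F p + F w ≤ 1 := by
    intro p w hp hw hs
    have h1 : F w ≤ F (1-p) := hFmono _ _ (by linarith)
    rw [hSym p hp (by linarith)] at h1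
    linarith
  have hq0 : (0:ℝ) < 2*l/(1-l) := div_pos (by linarith) h1l
  have hql : l < 2*l/(1-l) := by rw [lt_div_iff₀ h1l]; nlinarith
  have hgq : ∀ g : ℝ, 2*l/(1-l) ≤ g → 2*l/(1-l) ≤ 2/(1-l)*g := by
    intro g hg
    have h3 : (1:ℝ) ≤ 2/(1-l) := by rw [le_div_iff₀ h1l]; linarith
    have hg0 : (0:ℝ) ≤ g := le_trans hq0.le hg
    nlinarith [mul_le_mul_of_nonneg_right h3 hg0]
  have Rstep : ∀ p w g : ℝ, 0 ≤ p → p ≤ w → 2*l/(1-l) ≤ g → p+w+g ≤ 1 →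
      F p + F w ≤ F (p+w+g) + ε/2 := by
    intro p w g hp hpw hg hsum
    have hw0 : 0 ≤ w := le_trans hp hpw
    have hg0 : 0 < g := lt_of_lt_of_le hq0 hg
    have hgl : l < g := lt_of_lt_of_le hql hg
    rcases le_or_gt (p+w+g) ((1-l)/2) with hta | hta
    · have hpa : p ≤ (1-l)/2 := by linarith
      have hwa : w ≤ (1-l)/2 := by linarith
      rw [hS1 p hp hpa, hS1 w hw0 hwa, hS1 (p+w+g) (by linarith) hta]
      have hR := Rn (2/(1-l)*p) (2/(1-l)*w) (2/(1-l)*g)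
        (mul_nonneg h2pos.le hp) (mul_nonneg h2pos.le hw0) (hgq g hg)
        (by
          rw [show 2/(1-l)*p + 2/(1-l)*w + 2/(1-l)*g = 2/(1-l)*(p+w+g) from by ring]
          have h4 := hscale (p+w+g) ((1-l)/2) hta
          rw [hainv] at h4
          exact h4)
      rw [show 2/(1-l)*p + 2/(1-l)*w + 2/(1-l)*g = 2/(1-l)*(p+w+g) from by ring] at hR
      linarith
    rcases lt_or_ge (p+w+g) ((1+l)/2) with htb | htb
    · rw [hMid (p+w+g) hta.le htb.le]
      have hpwa : p + w ≤ (1-l)/2 := by linarith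
      have hpa : p ≤ (1-l)/2 := by linarith
      have hwa : w ≤ (1-l)/2 := by linarith
      rw [hS1 p hp hpa, hS1 w hw0 hwa]
      have hsum1 : 2/(1-l)*p + 2/(1-l)*w ≤ 1 := by
        have h4 := hscale (p+w) ((1-l)/2) hpwa
        rw [hainv] at h4
        nlinarith
      have h5 := hL (2/(1-l)*p) (2/(1-l)*w)
        (mul_nonneg h2pos.le hp) (mul_nonneg h2pos.le hw0) hsum1
      linarith
    · rw [hS2 (p+w+g) htb hsum]
      have hW0 : 0 ≤ 2/(1-l)*(p+w+g) - (1+l)/(1-l) := by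
        have h4 := hscale ((1+l)/2) (p+w+g) htb
        rw [hbinv] at h4
        linarith
      rcases le_or_gt ((1+l)/2) w with hwb | hwb
      · have hw1 : w ≤ 1 := by linarith
        rw [hS2 w hwb hw1]
        have hpa : p ≤ (1-l)/2 := by linarith
        rw [hS1 p hp hpa]
        have hzw0 : 0 ≤ 2/(1-l)*w - (1+l)/(1-l) := by
          have h4 := hscale ((1+l)/2) w hwb
          rw [hbinv] at h4
          linarith
        have hWle : 2/(1-l)*(p+w+g) - (1+l)/(1-l) ≤ 1 := by
          have h4 := hscale (p+w+g-(1+l)/2) ((1-l)/2) (by linarith)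
          rw [hainv, mul_sub, hbinv] at h4
          exact h4
        have hR := Rn (2/(1-l)*p) (2/(1-l)*w - (1+l)/(1-l)) (2/(1-l)*g)
          (mul_nonneg h2pos.le hp) hzw0 (hgq g hg)
          (by
            rw [show 2/(1-l)*p + (2/(1-l)*w - (1+l)/(1-l)) + 2/(1-l)*g
                = 2/(1-l)*(p+w+g) - (1+l)/(1-l) from by ring]
            exact hWle)
        rw [show 2/(1-l)*p + (2/(1-l)*w - (1+l)/(1-l)) + 2/(1-l)*g
            = 2/(1-l)*(p+w+g) - (1+l)/(1-l) from by ring] at hR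
        linarith
      rcases le_or_gt ((1-l)/2) w with hwa | hwa
      · rw [hMid w hwa hwb.le]
        have hpa : p ≤ (1-l)/2 := by linarith
        rw [hS1 p hp hpa]
        have hle : 2/(1-l)*p ≤ 2/(1-l)*(p+w+g) - (1+l)/(1-l) := by
          have h4 := hscale p (p+w+g-(1+l)/2) (by linarith)
          rw [mul_sub, hbinv] at h4
          exact h4
        have h5 := hFmono _ _ hle
        linarith
      · have hpa : p ≤ (1-l)/2 := by linarith
        rw [hS1 p hp hpa, hS1 w hw0 hwa.le]
        rcases le_or_gt (p+w) ((1-l)/2) with hpw2 | hpw2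
        · have hsum1 : 2/(1-l)*p + 2/(1-l)*w ≤ 1 := by
            have h4 := hscale (p+w) ((1-l)/2) hpw2
            rw [hainv] at h4
            nlinarith
          have h5 := hL (2/(1-l)*p) (2/(1-l)*w)
            (mul_nonneg h2pos.le hp) (mul_nonneg h2pos.le hw0) hsum1
          have h6 := (hFmem (2/(1-l)*(p+w+g) - (1+l)/(1-l))).1
          linarith
        · have hp1 : 2/(1-l)*p ≤ 1 := by
            have h4 := hscale p ((1-l)/2) hpa
            rw [hainv] at h4
            exact h4
          have hr0 : 0 ≤ 2/(1-l)*(p+w-(1-l)/2) :=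
            mul_nonneg h2pos.le (by linarith)
          have hP := Pn (1 - 2/(1-l)*p) (2/(1-l)*(p+w-(1-l)/2)) (by linarith) hr0
          have esum : (1 - 2/(1-l)*p) + 2/(1-l)*(p+w-(1-l)/2) = 2/(1-l)*w := by
            field_simp
            ring
          rw [esum] at hP
          have hsymp : F (1 - 2/(1-l)*p) = 1 - F (2/(1-l)*p) :=
            hSym _ (mul_nonneg h2pos.le hp) hp1
          have hrW : 2/(1-l)*(p+w-(1-l)/2) ≤ 2/(1-l)*(p+w+g) - (1+l)/(1-l) := by
            have h4 := hscale (p+w-(1-l)/2) (p+w+g-(1+l)/2) (by linarith)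
            have e1 : 2/(1-l)*(p+w+g-(1+l)/2)
                = 2/(1-l)*(p+w+g) - (1+l)/(1-l) := by rw [mul_sub, hbinv]
            linarith
          have h7 := hFmono _ _ hrW
          rw [hsymp] at hP
          linarith
  intro p w g hp hw hg hsum
  rcases le_total p w with h | h
  · exact Rstep p w g hp h hg hsum
  · have h2 := Rstep w p g hw h hg (by linarith)
    rw [show w+p+g = p+w+g from by ring] at h2
    linarith
set_option maxHeartbeats 1000000 in
/-- The extended middle-λ Cantor function is subadditive on nonnegative reals. -/
theorem extendedCantor_subadditive (l : ℝ) (hl : l ∈ Set.Ioo (0 : ℝ) 1)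
    (c : ℝ → ℝ)
    (hcb : ∃ M, ∀ x ∈ Set.Icc (0 : ℝ) 1, |c x| ≤ M)
    (hc : ∀ x ∈ Set.Icc (0 : ℝ) 1, c x = cantorMap l c x) :
    ∀ x y : ℝ, 0 ≤ x → 0 ≤ y →
      extendUnit c (x + y) ≤ extendUnit c x + extendUnit c y := by
  have hl0 := hl.1
  have hl1 := hl.2
  have h1l : (0:ℝ) < 1 - l := by linarith
  have h2pos : (0:ℝ) < 2/(1-l) := by positivity
  have hcm := c_mem hl hcb hc
  have hmono := c_mono hl hcb hc
  have hc0 := c_zero hl hc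
  have hc1 := c_one hl hc
  have hsymc := c_symm hl hcb hc
  have hFin : ∀ x : ℝ, 0 ≤ x → x ≤ 1 → extendUnit c x = c x := by
    intro x h0 h1; simp [extendUnit, not_lt.mpr h0, h1]
  have hFone : ∀ x : ℝ, 1 ≤ x → extendUnit c x = 1 := by
    intro x hx
    rcases le_or_gt x 1 with h | h
    · have hx1 : x = 1 := le_antisymm h hx
      rw [hx1, hFin 1 zero_le_one le_rfl, hc1]
    · simp [extendUnit, not_lt.mpr (by linarith : (0:ℝ) ≤ x), not_le.mpr h]
  have hFzero : ∀ x : ℝ, x ≤ 0 → extendUnit c x = 0 := by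
    intro x hx
    rcases lt_or_ge x 0 with h | h
    · simp [extendUnit, h]
    · have hx0 : x = 0 := le_antisymm hx h
      rw [hx0, hFin 0 le_rfl zero_le_one, hc0]
  have hFmem : ∀ x : ℝ, 0 ≤ extendUnit c x ∧ extendUnit c x ≤ 1 := by
    intro x
    rcases lt_or_ge x 0 with h | h
    · rw [hFzero x h.le]; norm_num
    · rcases le_or_gt x 1 with h1 | h1
      · rw [hFin x h h1]; exact hcm x ⟨h, h1⟩
      · rw [hFone x h1.le]; norm_num
  have hFmono : ∀ x y : ℝ, x ≤ y → extendUnit c x ≤ extendUnit c y := by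
    intro x y hxy
    rcases le_or_gt x 0 with h | h
    · rw [hFzero x h]; exact (hFmem y).1
    · rcases le_or_gt y 1 with h1 | h1
      · rw [hFin x h.le (by linarith), hFin y (by linarith) h1]
        exact hmono x ⟨h.le, by linarith⟩ y ⟨by linarith, h1⟩ hxy
      · rw [hFone y h1.le]; exact (hFmem x).2
  have hainv : 2/(1-l) * ((1-l)/2) = 1 := by field_simp
  have hbinv : 2/(1-l) * ((1+l)/2) = (1+l)/(1-l) := by ring
  have hS1 : ∀ x : ℝ, 0 ≤ x → x ≤ (1-l)/2 →
      extendUnit c x = extendUnit c (2/(1-l)*x) / 2 := by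
    intro x h0 h1
    have hx1 : x ≤ 1 := by linarith
    rw [hFin x h0 hx1, hc x ⟨h0, hx1⟩]
    rcases lt_or_ge x ((1-l)/2) with h | h
    · rw [cantorMap, if_pos h,
        hFin _ (mul_nonneg h2pos.le h0)
          (by rw [div_mul_eq_mul_div, div_le_one h1l]; linarith)]
      ring
    · have hxe : x = (1-l)/2 := le_antisymm h1 h
      rw [cantorMap, if_neg (not_lt.mpr h),
        if_pos (show x < (1+l)/2 by rw [hxe]; linarith)]
      rw [hxe, hainv, hFone 1 le_rfl]
  have hS2 : ∀ x : ℝ, (1+l)/2 ≤ x → x ≤ 1 →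
      extendUnit c x = 1/2 + extendUnit c (2/(1-l)*x - (1+l)/(1-l)) / 2 := by
    intro x h0 h1
    have hx0 : (0:ℝ) ≤ x := by linarith
    rw [hFin x hx0 h1, hc x ⟨hx0, h1⟩]
    rw [cantorMap, if_neg (not_lt.mpr (by linarith : (1-l)/2 ≤ x)), if_neg (not_lt.mpr h0)]
    have he : 2/(1-l)*x - (1+l)/(1-l) = (2*x-(1+l))/(1-l) := by ring
    have hz0 : 0 ≤ 2/(1-l)*x - (1+l)/(1-l) := by
      rw [he]; exact div_nonneg (by linarith) h1l.le
    have hz1 : 2/(1-l)*x - (1+l)/(1-l) ≤ 1 := by rw [he, div_le_one h1l]; linarith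
    rw [hFin _ hz0 hz1]
    ring
  have hMid : ∀ x : ℝ, (1-l)/2 ≤ x → x ≤ (1+l)/2 → extendUnit c x = 1/2 := by
    intro x h0 h1
    have hx0 : (0:ℝ) ≤ x := by linarith
    have hx1 : x ≤ 1 := by linarith
    rw [hFin x hx0 hx1, hc x ⟨hx0, hx1⟩]
    rcases lt_or_ge x ((1+l)/2) with h | h
    · rw [cantorMap, if_neg (not_lt.mpr h0), if_pos h]
    · have hxe : x = (1+l)/2 := le_antisymm h1 h
      rw [cantorMap, if_neg (not_lt.mpr h0), if_neg (not_lt.mpr h)]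
      have e : 2/(1-l)*x - (1+l)/(1-l) = 0 := by rw [hxe, hbinv]; ring
      rw [e, hc0]; norm_num
  have hSym : ∀ x : ℝ, 0 ≤ x → x ≤ 1 → extendUnit c (1-x) = 1 - extendUnit c x := by
    intro x h0 h1
    rw [hFin (1-x) (by linarith) (by linarith), hFin x h0 h1]
    exact hsymc x ⟨h0, h1⟩
  have hq0 : (0:ℝ) < 2*l/(1-l) := div_pos (by linarith) h1l
  have key : ∀ n : ℕ,
      (∀ x y : ℝ, 0 ≤ x → 0 ≤ y →
        extendUnit c (x+y) ≤ extendUnit c x + extendUnit c y + (1/2)^n) ∧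
      (∀ p w g : ℝ, 0 ≤ p → 0 ≤ w → 2*l/(1-l) ≤ g → p+w+g ≤ 1 →
        extendUnit c p + extendUnit c w ≤ extendUnit c (p+w+g) + (1/2)^n) := by
    intro n
    induction n with
    | zero =>
      constructor
      · intro x y hx hy
        have h1 := (hFmem (x+y)).2
        have h2 := (hFmem x).1
        have h3 := (hFmem y).1
        norm_num
        linarith
      · intro p w g hp hw hg hsum
        have h1 : extendUnit c p ≤ extendUnit c (p+w+g) :=
          hFmono _ _ (by linarith [hq0])
        have h2 := (hFmem w).2
        norm_num
        linarith
    | succ n ih =>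
      obtain ⟨Pn, Rn⟩ := ih
      have hε0 : (0:ℝ) ≤ (1/2)^n := by positivity
      have hε : ((1:ℝ)/2)^(n+1) = (1/2)^n/2 := by rw [pow_succ]; ring
      constructor
      · intro x y hx hy
        rw [hε]
        exact cantor_Pstep hl0 hl1 hε0 hFone hFmem hFmono hS1 hS2 hMid hSym Pn Rn x y hx hy
      · intro p w g hp hw hg hsum
        rw [hε]
        exact cantor_Rstep hl0 hl1 hε0 hFone hFmem hFmono hS1 hS2 hMid hSym Pn Rn
          p w g hp hw hg hsum
  intro x y hx hy
  apply limit_le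
  intro n
  have h2 := (key n).1 x y hx hy
  have e : ((1:ℝ)/2)^n = 1/2^n := by rw [div_pow, one_pow]
  rw [e] at h2
  exact h2
end

section
/- The middle-λ Cantor function c is Hölder continuous of exponent H_λ = log 2 / (log 2 - log(1-λ)) with constant 1: for all x, y ∈ [0,1], |c(x) - c(y)| ≤ |x - y|^{H_λ}. -/
open Set Real

set_option maxHeartbeats 2000000 in
/-- The middle-λ Cantor function is Hölder continuous with exponent
`H_λ = log 2 / (log 2 - log (1 - λ))` and constant 1 on `[0,1]`. -/
theorem cantorFun_holder (l : ℝ) (hl : l ∈ Set.Ioo (0 : ℝ) 1)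
    (c : ℝ → ℝ)
    (hcb : ∃ M, ∀ x ∈ Set.Icc (0 : ℝ) 1, |c x| ≤ M)
    (hc : ∀ x ∈ Set.Icc (0 : ℝ) 1, c x = cantorMap l c x) :
    ∀ x ∈ Set.Icc (0 : ℝ) 1, ∀ y ∈ Set.Icc (0 : ℝ) 1,
      |c x - c y| ≤ |x - y| ^ (Real.log 2 / (Real.log 2 - Real.log (1 - l))) := by
  obtain ⟨hl0, hl1⟩ := hl
  set H : ℝ := Real.log 2 / (Real.log 2 - Real.log (1 - l)) with hHdef
  set r : ℝ := (1 - l) / 2 with hrdef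
  have h1l : (0:ℝ) < 1 - l := by linarith
  have hr0 : (0:ℝ) < r := by positivity
  have hrhalf : r < 1/2 := by rw [hrdef]; linarith
  have hlog1l : Real.log (1 - l) < 0 := Real.log_neg h1l (by linarith)
  have hlog2 : (0:ℝ) < Real.log 2 := Real.log_pos (by norm_num)
  have hden : (0:ℝ) < Real.log 2 - Real.log (1 - l) := by linarith
  have hH0 : 0 < H := div_pos hlog2 hden
  have hH1 : H < 1 := (div_lt_one hden).2 (by linarith)
  -- r ^ H = 1 / 2
  have hrH : r ^ H = 1/2 := by
    have hlr : Real.log r = Real.log (1 - l) - Real.log 2 := by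
      rw [hrdef, Real.log_div (ne_of_gt h1l) two_ne_zero]
    have hmul : Real.log r * H = -Real.log 2 := by
      rw [hlr, hHdef]; field_simp; ring
    rw [Real.rpow_def_of_pos hr0, hmul, Real.exp_neg, Real.exp_log (by norm_num : (0:ℝ) < 2)]
    norm_num
  -- scaling identity
  have hscale : ∀ t : ℝ, 0 ≤ t → (1/2) * (t/r)^H = t^H := by
    intro t ht
    rw [Real.div_rpow ht hr0.le, hrH]
    field_simp
  -- branch equations
  have h1r : (1 + l)/2 = 1 - r := by rw [hrdef]; ring
  have hargl : ∀ t : ℝ, 2/(1-l) * t = t / r := by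
    intro t; rw [hrdef]; field_simp
  have hleft : ∀ t : ℝ, 0 ≤ t → t < r → c t = 1/2 * c (t/r) := by
    intro t ht0 htr
    have := hc t ⟨ht0, by linarith⟩
    rw [cantorMap] at this
    simp only [if_pos (show t < (1-l)/2 from by rw [← hrdef]; exact htr)] at this
    rw [this, hargl]
  have hgap : ∀ t : ℝ, r ≤ t → t < 1 - r → c t = 1/2 := by
    intro t ht0 htr
    have := hc t ⟨le_trans hr0.le ht0, by linarith⟩
    rw [cantorMap] at this
    rw [if_neg (show ¬ t < (1-l)/2 from by rw [← hrdef]; linarith),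
      if_pos (show t < (1+l)/2 from by rw [h1r]; exact htr)] at this
    exact this
  have hright : ∀ t : ℝ, 1 - r ≤ t → t ≤ 1 → c t = 1/2 + 1/2 * c ((t - (1-r))/r) := by
    intro t ht0 ht1
    have := hc t ⟨by linarith, ht1⟩
    rw [cantorMap] at this
    rw [if_neg (show ¬ t < (1-l)/2 from by rw [← hrdef]; linarith),
      if_neg (show ¬ t < (1+l)/2 from by rw [h1r]; linarith)] at this
    rw [this]
    congr 1
    congr 1
    rw [hargl, hrdef]
    field_simp
    ring
  -- memberships
  have hmeml : ∀ t : ℝ, 0 ≤ t → t ≤ r → t / r ∈ Icc (0:ℝ) 1 :=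
    fun t ht0 htr => ⟨div_nonneg ht0 hr0.le, (div_le_one hr0).2 htr⟩
  have hmemr : ∀ t : ℝ, 1 - r ≤ t → t ≤ 1 → (t - (1-r))/r ∈ Icc (0:ℝ) 1 :=
    fun t ht0 ht1 => ⟨div_nonneg (by linarith) hr0.le, (div_le_one hr0).2 (by linarith)⟩
  -- values at endpoints
  have hc0 : c 0 = 0 := by
    have h := hleft 0 le_rfl hr0
    rw [zero_div] at h; linarith
  have hc1 : c 1 = 1 := by
    have h := hright 1 (by linarith) le_rfl
    have : (1 - (1-r))/r = 1 := by field_simp; ring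
    rw [this] at h; linarith
  -- two-point concavity mean inequality
  have Kmean : ∀ a b : ℝ, 0 ≤ a → 0 ≤ b → a^H + b^H ≤ 2 * ((a+b)/2)^H := by
    intro a b ha hb
    have := (Real.concaveOn_rpow hH0.le hH1.le).2 (mem_Ici.2 ha) (mem_Ici.2 hb)
      (by norm_num : (0:ℝ) ≤ 1/2) (by norm_num : (0:ℝ) ≤ 1/2) (by norm_num)
    simp only [smul_eq_mul] at this
    have h2 : (1:ℝ)/2 * a + 1/2 * b = (a+b)/2 := by ring
    rw [h2] at this
    linarith
  -- key inequality : s^H + 1/2 ≤ (s + (1-r))^H for 0 ≤ s ≤ r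
  have K : ∀ s : ℝ, 0 ≤ s → s ≤ r → s^H + 1/2 ≤ (s + (1-r))^H := by
    intro s hs0 hsr
    set u : ℝ := s / r with hu
    have hu0 : 0 ≤ u := div_nonneg hs0 hr0.le
    have hu1 : u ≤ 1 := (div_le_one hr0).2 hsr
    have hsu : s = r * u := by rw [hu]; field_simp
    have hcc := (Real.concaveOn_rpow hH0.le hH1.le).2 (mem_Ici.2 hu0)
      (mem_Ici.2 (by norm_num : (0:ℝ) ≤ 1)) (le_of_lt hr0) (by linarith : (0:ℝ) ≤ 1 - r)
      (by ring)
    simp only [smul_eq_mul, mul_one, Real.one_rpow] at hcc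
    have huH1 : u ^ H ≤ 1 := Real.rpow_le_one hu0 hu1 hH0.le
    have hsH : s ^ H = 1/2 * u^H := by
      rw [hsu, Real.mul_rpow hr0.le hu0, hrH]
    have hmid : 1/2 * u^H + 1/2 ≤ r * u^H + (1 - r) := by nlinarith
    have hfin : r * u + (1 - r) = s + (1 - r) := by rw [hsu]
    rw [hsH]
    calc 1/2 * u^H + 1/2 ≤ r * u^H + (1-r) := hmid
      _ ≤ (r * u + (1-r))^H := hcc
      _ = (s + (1-r))^H := by rw [hfin]
  -- endpoint estimates with error
  obtain ⟨M, hM⟩ := hcb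
  have hM0 : 0 ≤ M := le_trans (abs_nonneg _) (hM 0 ⟨le_rfl, zero_le_one⟩)
  set B : ℝ := M + 1 with hB
  have hB0 : (0:ℝ) < B := by rw [hB]; linarith
  have J : ∀ n : ℕ, ∀ t ∈ Icc (0:ℝ) 1,
      |c t| ≤ t^H + B / 2^n ∧ |c t - 1| ≤ (1-t)^H + B / 2^n := by
    intro n
    induction n with
    | zero =>
      intro t ht
      constructor
      · have := hM t ht
        have h1 : (0:ℝ) ≤ t^H := Real.rpow_nonneg ht.1 _
        simp only [pow_zero]
        rw [hB]; linarith
      · have := hM t ht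
        have h1 : (0:ℝ) ≤ (1-t)^H := Real.rpow_nonneg (by linarith [ht.2]) _
        have h2 : |c t - 1| ≤ |c t| + 1 := by
          calc |c t - 1| ≤ |c t| + |(1:ℝ)| := abs_sub _ _
            _ = |c t| + 1 := by rw [abs_one]
        simp only [pow_zero]
        rw [hB]; linarith
    | succ n ih =>
      intro t ⟨ht0, ht1⟩
      have hhalf : B / 2^(n+1) = (B / 2^n)/2 := by ring
      rcases lt_or_ge t r with htr | htr
      · -- left branch
        have harg := hmeml t ht0 htr.le
        obtain ⟨J1, J2⟩ := ih (t/r) harg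
        have hct := hleft t ht0 htr
        constructor
        · rw [hct, abs_mul, abs_of_pos (by norm_num : (0:ℝ) < 1/2)]
          calc 1/2 * |c (t/r)| ≤ 1/2 * ((t/r)^H + B/2^n) := by linarith
            _ = 1/2 * (t/r)^H + B/2^(n+1) := by rw [hhalf]; ring
            _ = t^H + B/2^(n+1) := by rw [hscale t ht0]
        · have hrw : 1 - t/r = (r - t)/r := by field_simp
          rw [hrw] at J2
          have hs := K (r - t) (by linarith) (by linarith)
          have hseq : (r - t) + (1 - r) = 1 - t := by ring
          rw [hseq] at hs
          have hhalfrt : 1/2 * ((r-t)/r)^H = (r-t)^H := hscale (r-t) (by linarith)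
          have : |c t - 1| ≤ 1/2 * |c (t/r) - 1| + 1/2 := by
            rw [hct]
            calc |1/2 * c (t/r) - 1| = |1/2 * (c (t/r) - 1) + (-(1/2))| := by
                  rw [show (1:ℝ)/2 * c (t/r) - 1 = 1/2 * (c (t/r) - 1) + (-(1/2)) by ring]
              _ ≤ |1/2 * (c (t/r) - 1)| + |(-(1/2):ℝ)| := abs_add_le _ _
              _ = 1/2 * |c (t/r) - 1| + 1/2 := by
                  rw [abs_mul, abs_of_pos (by norm_num : (0:ℝ) < 1/2)]; norm_num
          calc |c t - 1| ≤ 1/2 * |c (t/r) - 1| + 1/2 := this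
            _ ≤ 1/2 * (((r-t)/r)^H + B/2^n) + 1/2 := by linarith
            _ = (r-t)^H + 1/2 + B/2^(n+1) := by rw [hhalf, ← hhalfrt]; ring
            _ ≤ (1-t)^H + B/2^(n+1) := by linarith
      · rcases lt_or_ge t (1-r) with htg | htg
        · -- gap
          have hct := hgap t htr htg
          have hBpos : (0:ℝ) < B/2^(n+1) := by positivity
          constructor
          · rw [hct, abs_of_pos (by norm_num : (0:ℝ) < 1/2)]
            have : r ^ H ≤ t ^ H := Real.rpow_le_rpow hr0.le htr hH0.le
            rw [hrH] at this; linarith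
          · rw [hct]
            have h12 : |(1:ℝ)/2 - 1| = 1/2 := by norm_num
            rw [h12]
            have : r ^ H ≤ (1-t) ^ H := Real.rpow_le_rpow hr0.le (by linarith) hH0.le
            rw [hrH] at this; linarith
        · -- right branch
          have harg := hmemr t htg ht1
          obtain ⟨J1, J2⟩ := ih _ harg
          have hct := hright t htg ht1
          have hs0 : (0:ℝ) ≤ t - (1-r) := by linarith
          have hhalfs : 1/2 * ((t - (1-r))/r)^H = (t - (1-r))^H := hscale _ hs0
          constructor
          · have hs := K (t - (1-r)) hs0 (by linarith)
            have hseq : (t - (1-r)) + (1 - r) = t := by ring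
            rw [hseq] at hs
            have habs : |c t| ≤ 1/2 + 1/2 * |c ((t - (1-r))/r)| := by
              rw [hct]
              calc |1/2 + 1/2 * c ((t - (1-r))/r)| ≤ |(1:ℝ)/2| + |1/2 * c ((t - (1-r))/r)| :=
                    abs_add_le _ _
                _ = 1/2 + 1/2 * |c ((t - (1-r))/r)| := by
                    rw [abs_mul, abs_of_pos (by norm_num : (0:ℝ) < 1/2)]
            calc |c t| ≤ 1/2 + 1/2 * |c ((t - (1-r))/r)| := habs
              _ ≤ 1/2 + 1/2 * (((t - (1-r))/r)^H + B/2^n) := by linarith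
              _ = (t - (1-r))^H + 1/2 + B/2^(n+1) := by rw [hhalf, ← hhalfs]; ring
              _ ≤ t^H + B/2^(n+1) := by linarith
          · have hrw : 1 - (t - (1-r))/r = (1-t)/r := by field_simp; ring
            rw [hrw] at J2
            have hhalf1t : 1/2 * ((1-t)/r)^H = (1-t)^H := hscale _ (by linarith)
            have habs : |c t - 1| = 1/2 * |c ((t - (1-r))/r) - 1| := by
              rw [hct]
              have : 1/2 + 1/2 * c ((t - (1-r))/r) - 1 = 1/2 * (c ((t - (1-r))/r) - 1) := by ring
              rw [this, abs_mul, abs_of_pos (by norm_num : (0:ℝ) < 1/2)]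
            calc |c t - 1| = 1/2 * |c ((t - (1-r))/r) - 1| := habs
              _ ≤ 1/2 * (((1-t)/r)^H + B/2^n) := by linarith
              _ = (1-t)^H + B/2^(n+1) := by rw [hhalf, ← hhalf1t]; ring
  -- endpoint estimates
  have E : ∀ t ∈ Icc (0:ℝ) 1, |c t| ≤ t^H ∧ |c t - 1| ≤ (1-t)^H := by
    intro t ht
    have key : ∀ bb : ℝ, (∀ n : ℕ, bb ≤ B / 2^n) → bb ≤ 0 := by
      intro bb hb
      by_contra hpos
      push_neg at hpos
      obtain ⟨n, hn⟩ := exists_pow_lt_of_lt_one (div_pos hpos hB0) (by norm_num : (1:ℝ)/2 < 1)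
      have hn' : (1:ℝ)/2^n < bb/B := by rwa [div_pow, one_pow] at hn
      have h2n : (0:ℝ) < 2^n := by positivity
      have hmul := mul_lt_mul_of_pos_left hn' hB0
      have he1 : B * ((1:ℝ)/2^n) = B/2^n := by ring
      have he2 : B * (bb/B) = bb := by field_simp
      rw [he1, he2] at hmul
      linarith [hb n]
    constructor
    · have hh : ∀ n : ℕ, |c t| - t^H ≤ B/2^n := by
        intro n
        have := (J n t ht).1
        linarith
      linarith [key _ hh]
    · have hh : ∀ n : ℕ, |c t - 1| - (1-t)^H ≤ B/2^n := by
        intro n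
        have := (J n t ht).2
        linarith
      linarith [key _ hh]
  -- cross-case lemmas
  have crossLG : ∀ x y : ℝ, 0 ≤ x → x < r → r ≤ y → y < 1 - r → |c x - c y| ≤ (y-x)^H := by
    intro x y hx0 hxr hyr hy1
    rw [hgap y hyr hy1, hleft x hx0 hxr]
    have hrw : 1 - x/r = (r-x)/r := by field_simp
    have hE := (E (x/r) (hmeml x hx0 hxr.le)).2
    rw [hrw] at hE
    have habs : |1/2 * c (x/r) - 1/2| = 1/2 * |c (x/r) - 1| := by
      rw [show (1:ℝ)/2 * c (x/r) - 1/2 = 1/2 * (c (x/r) - 1) by ring, abs_mul,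
        abs_of_pos (by norm_num : (0:ℝ) < 1/2)]
    rw [habs]
    calc 1/2 * |c (x/r) - 1| ≤ 1/2 * ((r-x)/r)^H := by linarith
      _ = (r-x)^H := hscale _ (by linarith)
      _ ≤ (y-x)^H := Real.rpow_le_rpow (by linarith) (by linarith) hH0.le
  have crossGR : ∀ x y : ℝ, r ≤ x → x < 1 - r → 1 - r ≤ y → y ≤ 1 → |c x - c y| ≤ (y-x)^H := by
    intro x y hx0 hxr hyr hy1
    rw [hgap x hx0 hxr, hright y hyr hy1]
    have hE := (E _ (hmemr y hyr hy1)).1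
    have habs : |1/2 - (1/2 + 1/2 * c ((y - (1-r))/r))| = 1/2 * |c ((y - (1-r))/r)| := by
      rw [show (1:ℝ)/2 - (1/2 + 1/2 * c ((y - (1-r))/r)) = -(1/2 * c ((y - (1-r))/r)) by ring,
        abs_neg, abs_mul, abs_of_pos (by norm_num : (0:ℝ) < 1/2)]
    rw [habs]
    calc 1/2 * |c ((y - (1-r))/r)| ≤ 1/2 * ((y - (1-r))/r)^H := by linarith
      _ = (y - (1-r))^H := hscale _ (by linarith)
      _ ≤ (y-x)^H := Real.rpow_le_rpow (by linarith) (by linarith) hH0.le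
  have crossLR : ∀ x y : ℝ, 0 ≤ x → x < r → 1 - r ≤ y → y ≤ 1 → |c x - c y| ≤ (y-x)^H := by
    intro x y hx0 hxr hyr hy1
    set a : ℝ := r - x with ha
    set b : ℝ := y - (1-r) with hb'
    have ha0 : 0 ≤ a := by rw [ha]; linarith
    have hb0 : 0 ≤ b := by rw [hb']; linarith
    have hd1 : y - x ≤ 1 := by linarith
    have hdl : l ≤ y - x := by rw [hrdef] at *; linarith
    rw [hleft x hx0 hxr, hright y hyr hy1]
    have hE1 := (E (x/r) (hmeml x hx0 hxr.le)).2
    have hE2 := (E _ (hmemr y hyr hy1)).1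
    have hrw : 1 - x/r = a/r := by rw [ha]; field_simp
    rw [hrw] at hE1
    have habs : |1/2 * c (x/r) - (1/2 + 1/2 * c ((y - (1-r))/r))| ≤
        1/2 * |c (x/r) - 1| + 1/2 * |c ((y - (1-r))/r)| := by
      calc |1/2 * c (x/r) - (1/2 + 1/2 * c ((y - (1-r))/r))|
          = |1/2 * (c (x/r) - 1) + (-(1/2 * c ((y - (1-r))/r)))| := by
            rw [show (1:ℝ)/2 * c (x/r) - (1/2 + 1/2 * c ((y - (1-r))/r))
              = 1/2 * (c (x/r) - 1) + (-(1/2 * c ((y - (1-r))/r))) by ring]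
        _ ≤ |1/2 * (c (x/r) - 1)| + |(-(1/2 * c ((y - (1-r))/r)))| := abs_add_le _ _
        _ = 1/2 * |c (x/r) - 1| + 1/2 * |c ((y - (1-r))/r)| := by
            rw [abs_neg, abs_mul, abs_mul, abs_of_pos (by norm_num : (0:ℝ) < 1/2)]
    have hsa : 1/2 * (a/r)^H = a^H := hscale _ ha0
    have hsb : 1/2 * (b/r)^H = b^H := hscale _ hb0
    have hmean := Kmean a b ha0 hb0
    have hab : (a + b)/2 ≤ r * (y - x) := by
      have : a + b = (y - x) - l := by rw [ha, hb', hrdef]; ring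
      rw [this, hrdef]
      nlinarith
    have hmono : ((a+b)/2)^H ≤ (r * (y-x))^H :=
      Real.rpow_le_rpow (by linarith) hab hH0.le
    have hprod : (r * (y-x))^H = 1/2 * (y-x)^H := by
      rw [Real.mul_rpow hr0.le (by linarith), hrH]
    calc |1/2 * c (x/r) - (1/2 + 1/2 * c ((y - (1-r))/r))|
        ≤ 1/2 * |c (x/r) - 1| + 1/2 * |c ((y - (1-r))/r)| := habs
      _ ≤ 1/2 * (a/r)^H + 1/2 * ((y - (1-r))/r)^H := by linarith
      _ = a^H + b^H := by rw [hsa]; rw [hb'] at hsb ⊢; rw [hsb]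
      _ ≤ 2 * ((a+b)/2)^H := hmean
      _ ≤ 2 * (1/2 * (y-x)^H) := by rw [← hprod]; linarith
      _ = (y-x)^H := by ring
  -- main induction on scale
  have S : ∀ n : ℕ, ∀ x y : ℝ, x ∈ Icc (0:ℝ) 1 → y ∈ Icc (0:ℝ) 1 → x < y →
      r^(n+1) < y - x → |c x - c y| ≤ (y-x)^H := by
    intro n
    induction n with
    | zero =>
      intro x y ⟨hx0, hx1⟩ ⟨hy0, hy1⟩ hxy hd
      rw [pow_one] at hd
      rcases lt_or_ge y r with hyr | hyr
      · exfalso; linarith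
      · rcases lt_or_ge y (1-r) with hy1r | hy1r
        · rcases lt_or_ge x r with hxr | hxr
          · exact crossLG x y hx0 hxr hyr hy1r
          · rw [hgap x hxr (by linarith), hgap y hyr hy1r]
            simp only [sub_self, abs_zero]
            exact Real.rpow_nonneg (by linarith) _
        · rcases lt_or_ge x r with hxr | hxr
          · exact crossLR x y hx0 hxr hy1r hy1
          · rcases lt_or_ge x (1-r) with hx1r | hx1r
            · exact crossGR x y hxr hx1r hy1r hy1
            · exfalso; linarith
    | succ n ih =>
      intro x y ⟨hx0, hx1⟩ ⟨hy0, hy1⟩ hxy hd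
      have hd0 : (0:ℝ) < y - x := by linarith
      rcases lt_or_ge y r with hyr | hyr
      · -- both in left piece
        have hx' := hmeml x hx0 (by linarith)
        have hy' := hmeml y hy0 hyr.le
        have hlt : x/r < y/r := by
          rw [div_lt_div_iff₀ hr0 hr0]; nlinarith
        have hdist : r^(n+1) < y/r - x/r := by
          rw [div_sub_div_same, lt_div_iff₀ hr0, ← pow_succ]
          exact hd
        have hih := ih (x/r) (y/r) hx' hy' hlt hdist
        rw [hleft x hx0 (by linarith), hleft y hy0 hyr]
        have habs : |1/2 * c (x/r) - 1/2 * c (y/r)| = 1/2 * |c (x/r) - c (y/r)| := by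
          rw [show (1:ℝ)/2 * c (x/r) - 1/2 * c (y/r) = 1/2 * (c (x/r) - c (y/r)) by ring,
            abs_mul, abs_of_pos (by norm_num : (0:ℝ) < 1/2)]
        rw [habs]
        have hrw : y/r - x/r = (y-x)/r := by rw [div_sub_div_same]
        rw [hrw] at hih
        calc 1/2 * |c (x/r) - c (y/r)| ≤ 1/2 * ((y-x)/r)^H := by linarith
          _ = (y-x)^H := hscale _ hd0.le
      · rcases lt_or_ge y (1-r) with hy1r | hy1r
        · rcases lt_or_ge x r with hxr | hxr
          · exact crossLG x y hx0 hxr hyr hy1r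
          · rw [hgap x hxr (by linarith), hgap y hyr hy1r]
            simp only [sub_self, abs_zero]
            exact Real.rpow_nonneg (by linarith) _
        · rcases lt_or_ge x r with hxr | hxr
          · exact crossLR x y hx0 hxr hy1r hy1
          · rcases lt_or_ge x (1-r) with hx1r | hx1r
            · exact crossGR x y hxr hx1r hy1r hy1
            · -- both in right piece
              have hx' := hmemr x hx1r hx1
              have hy' := hmemr y hy1r hy1
              have hlt : (x - (1-r))/r < (y - (1-r))/r := by
                rw [div_lt_div_iff₀ hr0 hr0]; nlinarith
              have hdist : r^(n+1) < (y - (1-r))/r - (x - (1-r))/r := by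
                rw [div_sub_div_same, show y - (1-r) - (x - (1-r)) = y - x by ring,
                  lt_div_iff₀ hr0, ← pow_succ]
                exact hd
              have hih := ih _ _ hx' hy' hlt hdist
              rw [hright x hx1r hx1, hright y hy1r hy1]
              have habs : |1/2 + 1/2 * c ((x - (1-r))/r) - (1/2 + 1/2 * c ((y - (1-r))/r))|
                  = 1/2 * |c ((x - (1-r))/r) - c ((y - (1-r))/r)| := by
                rw [show (1:ℝ)/2 + 1/2 * c ((x - (1-r))/r) - (1/2 + 1/2 * c ((y - (1-r))/r))
                    = 1/2 * (c ((x - (1-r))/r) - c ((y - (1-r))/r)) by ring,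
                  abs_mul, abs_of_pos (by norm_num : (0:ℝ) < 1/2)]
              rw [habs]
              have hrw : (y - (1-r))/r - (x - (1-r))/r = (y-x)/r := by
                rw [div_sub_div_same]; ring_nf
              rw [hrw] at hih
              calc 1/2 * |c ((x - (1-r))/r) - c ((y - (1-r))/r)| ≤ 1/2 * ((y-x)/r)^H := by
                    linarith
                _ = (y-x)^H := hscale _ hd0.le
  -- conclusion
  have main : ∀ x y : ℝ, x ∈ Icc (0:ℝ) 1 → y ∈ Icc (0:ℝ) 1 → x < y →
      |c x - c y| ≤ (y - x)^H := by
    intro x y hx hy hxy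
    have hd0 : (0:ℝ) < y - x := by linarith
    obtain ⟨n, hn⟩ := exists_pow_lt_of_lt_one hd0 (by linarith : r < 1)
    have hle : r^(n+1) ≤ r^n := pow_le_pow_of_le_one hr0.le (by linarith) (Nat.le_succ n)
    exact S n x y hx hy hxy (lt_of_le_of_lt hle hn)
  intro x hx y hy
  rcases lt_trichotomy x y with h | h | h
  · have := main x y hx hy h
    rwa [abs_of_neg (show x - y < 0 by linarith), neg_sub]
  · subst h
    simp [sub_self, Real.zero_rpow hH0.ne']
  · have h1 := main y x hy hx h
    rw [abs_sub_comm (c x) (c y), abs_sub_comm x y,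
      abs_of_neg (show y - x < 0 by linarith), neg_sub]
    exact h1
end

section
/- c(h) ≤ h^{H_λ} for all h ∈ [0,1], where c is the middle-λ Cantor function and H_λ = log 2 / (log 2 - log(1-λ)). -/
open Set Real Filter

/-- The middle-λ Cantor function satisfies `c h ≤ h ^ H_λ` for `h ∈ [0,1]`,
where `H_λ = log 2 / (log 2 - log (1 - λ))`. -/
theorem cantorFun_le_rpow (l : ℝ) (hl : l ∈ Set.Ioo (0 : ℝ) 1)
    (c : ℝ → ℝ)
    (hcb : ∃ M, ∀ x ∈ Set.Icc (0 : ℝ) 1, |c x| ≤ M)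
    (hc : ∀ x ∈ Set.Icc (0 : ℝ) 1, c x = cantorMap l c x) :
    ∀ h ∈ Set.Icc (0 : ℝ) 1,
      c h ≤ h ^ (Real.log 2 / (Real.log 2 - Real.log (1 - l))) := by
  obtain ⟨M, hM⟩ := hcb
  obtain ⟨hl0, hl1⟩ := hl
  set H := Real.log 2 / (Real.log 2 - Real.log (1 - l)) with hHdef
  have h1l0 : (0:ℝ) < 1 - l := by linarith
  have h1l1 : 1 - l < 1 := by linarith
  have hlogneg : Real.log (1 - l) < 0 := Real.log_neg h1l0 h1l1
  have hlog2 : 0 < Real.log 2 := Real.log_pos (by norm_num)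
  have hD : 0 < Real.log 2 - Real.log (1 - l) := by linarith
  have hH0 : 0 < H := div_pos hlog2 hD
  have hH1 : H < 1 := by rw [hHdef, div_lt_one hD]; linarith
  set a := 2 / (1 - l) with ha
  have ha0 : 0 < a := by positivity
  have haH : a ^ H = 2 := by
    rw [Real.rpow_def_of_pos ha0, ha, Real.log_div (by norm_num) (ne_of_gt h1l0), hHdef,
      mul_comm, div_mul_cancel₀ _ (ne_of_gt hD), Real.exp_log (by norm_num)]
  have hM0 : 0 ≤ M := (abs_nonneg _).trans (hM 0 (by norm_num))
  set s := (1 + l) / (1 - l) with hs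
  have hs1 : 1 ≤ s := by rw [hs, le_div_iff₀ h1l0]; linarith
  -- key inequality : 1 + y ^ H ≤ (y + s) ^ H for y ∈ [0,1]
  have key : ∀ y ∈ Icc (0:ℝ) 1, 1 + y ^ H ≤ (y + s) ^ H := by
    have hanti : AntitoneOn (fun t : ℝ => (t + s) ^ H - t ^ H) (Icc 0 1) := by
      have hderiv : ∀ t ∈ interior (Icc (0:ℝ) 1),
          HasDerivAt (fun t : ℝ => (t + s) ^ H - t ^ H)
            (H * (t + s) ^ (H - 1) - H * t ^ (H - 1)) t := by
        intro t ht
        rw [interior_Icc] at ht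
        have hts : 0 < t + s := by linarith [ht.1]
        have h1 : HasDerivAt (fun t : ℝ => (t + s) ^ H) (H * (t + s) ^ (H - 1)) t := by
          have h' := (Real.hasDerivAt_rpow_const (x := t + s) (p := H)
            (Or.inl hts.ne')).comp t ((hasDerivAt_id t).add_const s)
          simpa [Function.comp_def] using h'
        have h2 : HasDerivAt (fun t : ℝ => t ^ H) (H * t ^ (H - 1)) t :=
          Real.hasDerivAt_rpow_const (Or.inl ht.1.ne')
        exact h1.sub h2
      apply antitoneOn_of_hasDerivWithinAt_nonpos (convex_Icc 0 1)
        (f' := fun t => H * (t + s) ^ (H - 1) - H * t ^ (H - 1))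
      · apply ContinuousOn.sub
        · exact ((Real.continuous_rpow_const hH0.le).comp (continuous_id.add
            continuous_const)).continuousOn
        · exact (Real.continuous_rpow_const hH0.le).continuousOn
      · intro t ht
        exact ((hderiv t ht).hasDerivWithinAt)
      · intro t ht
        rw [interior_Icc] at ht
        have hle : (t + s) ^ (H - 1) ≤ t ^ (H - 1) :=
          Real.rpow_le_rpow_of_nonpos ht.1 (by linarith [ht.1]) (by linarith)
        nlinarith
    intro y hy
    have h1 : ((1:ℝ) + s) ^ H - (1:ℝ) ^ H ≤ (y + s) ^ H - y ^ H :=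
      hanti hy (right_mem_Icc.mpr zero_le_one) hy.2
    have h1s : (1:ℝ) + s = a := by
      rw [hs, ha]; field_simp; norm_num
    rw [h1s, haH, Real.one_rpow] at h1
    linarith
  -- main induction
  have main : ∀ n : ℕ, ∀ x ∈ Icc (0:ℝ) 1, c x ≤ x ^ H + M / 2 ^ n := by
    intro n
    induction n with
    | zero =>
      intro x hx
      have : c x ≤ M := (le_abs_self _).trans (hM x hx)
      have hx0 : 0 ≤ x ^ H := Real.rpow_nonneg hx.1 _
      simpa using by linarith
    | succ n ih =>
      intro x hx
      have h2n : (0:ℝ) < 2 ^ n := by positivity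
      rw [hc x hx, cantorMap]
      by_cases h1 : x < (1 - l) / 2
      · rw [if_pos h1]
        have hax : 2 / (1 - l) * x ∈ Icc (0:ℝ) 1 := by
          constructor
          · exact mul_nonneg (by positivity) hx.1
          · rw [div_mul_eq_mul_div, div_le_one h1l0]
            nlinarith
        have hih := ih _ hax
        have hmul : (2 / (1 - l) * x) ^ H = 2 * x ^ H := by
          rw [Real.mul_rpow (by positivity) hx.1, ← ha, haH]
        rw [hmul] at hih
        rw [pow_succ]
        have hMd : M / (2:ℝ) ^ n / 2 = M / (2 ^ n * 2) := div_div _ _ _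
        linarith
      · rw [if_neg h1]
        have hxge : (1 - l) / 2 ≤ x := not_lt.mp h1
        by_cases h2 : x < (1 + l) / 2
        · rw [if_pos h2]
          have hhalf : (1:ℝ)/2 ≤ x ^ H := by
            have h1 : ((1 - l)/2) ^ H ≤ x ^ H :=
              Real.rpow_le_rpow (by positivity) hxge hH0.le
            have h2' : (((1 - l)/2 : ℝ)) ^ H = 1/2 := by
              rw [show ((1 - l)/2 : ℝ) = a⁻¹ by rw [ha, inv_div],
                Real.inv_rpow ha0.le, haH]
              norm_num
            rw [h2'] at h1
            exact h1
          have hMd : (0:ℝ) ≤ M / 2 ^ (n + 1) := by positivity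
          have hx0 : (0:ℝ) ≤ x ^ H := Real.rpow_nonneg (le_trans (by positivity) hxge) _
          linarith
        · rw [if_neg h2]
          have hxge2 : (1 + l) / 2 ≤ x := not_lt.mp h2
          set y := 2 / (1 - l) * x - (1 + l) / (1 - l) with hy
          have hys : y + s = a * x := by rw [hy, hs, ha]; ring
          have hyq : y = (2 * x - (1 + l)) / (1 - l) := by rw [hy]; ring
          have hy01 : y ∈ Icc (0:ℝ) 1 := by
            rw [hyq]
            constructor
            · exact div_nonneg (by linarith) h1l0.le
            · rw [div_le_one h1l0]; linarith [hx.2]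
          have hih := ih y hy01
          have hkey := key y hy01
          have hxH : 2 * x ^ H = (y + s) ^ H := by
            rw [hys, Real.mul_rpow ha0.le hx.1, haH]
          rw [pow_succ]
          have hMd : M / (2:ℝ) ^ n / 2 = M / (2 ^ n * 2) := div_div _ _ _
          linarith
  -- pass to the limit
  intro x hx
  have htend : Tendsto (fun n : ℕ => x ^ H + M / 2 ^ n) atTop (nhds (x ^ H + 0)) := by
    apply Tendsto.add tendsto_const_nhds
    simpa using tendsto_const_nhds.div_atTop
      (tendsto_pow_atTop_atTop_of_one_lt (by norm_num : (1:ℝ) < 2))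
  rw [add_zero] at htend
  exact ge_of_tendsto' htend (fun n => main n x hx)
end

section
/- With the extended Cantor iterates c̄ₙ (starting from c₀ = 0 on [0,1], extended by 0 below 0 and 1 above 1), for every x, y ∈ ℝ and n ∈ ℕ, |c̄(x) - c̄ₙ(y)| ≤ |x - y|^{H_λ} + 2^{-n+2}, where H_λ = log 2 / (log 2 - log(1-λ)). -/
open Set Real

noncomputable def Hexp (l : ℝ) : ℝ := Real.log 2 / (Real.log 2 - Real.log (1 - l))

noncomputable def hSeq (l : ℝ) : ℕ → ℝ → ℝ :=
  cantorSeq l (fun x => if x < 1 then 0 else 1)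

lemma Hexp_pos {l : ℝ} (hl : l ∈ Set.Ioo (0:ℝ) 1) : 0 < Hexp l := by
  have h1l : (0:ℝ) < 1 - l := by linarith [hl.2]
  have hlog : Real.log (1 - l) < 0 := Real.log_neg h1l (by linarith [hl.1])
  have hl2 : 0 < Real.log 2 := Real.log_pos (by norm_num)
  exact div_pos hl2 (by linarith)

lemma Hexp_le_one {l : ℝ} (hl : l ∈ Set.Ioo (0:ℝ) 1) : Hexp l ≤ 1 := by
  have h1l : (0:ℝ) < 1 - l := by linarith [hl.2]
  have hlog : Real.log (1 - l) < 0 := Real.log_neg h1l (by linarith [hl.1])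
  have hl2 : 0 < Real.log 2 := Real.log_pos (by norm_num)
  rw [Hexp, div_le_one (by linarith)]
  linarith

lemma r_rpow {l : ℝ} (hl : l ∈ Set.Ioo (0:ℝ) 1) : ((1 - l)/2) ^ Hexp l = 1/2 := by
  have h1l : (0:ℝ) < 1 - l := by linarith [hl.2]
  have hr : (0:ℝ) < (1 - l)/2 := by linarith
  have hlog : Real.log (1 - l) < 0 := Real.log_neg h1l (by linarith [hl.1])
  have hl2 : 0 < Real.log 2 := Real.log_pos (by norm_num)
  have hD : Real.log 2 - Real.log (1 - l) ≠ 0 := by linarith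
  rw [Real.rpow_def_of_pos hr]
  have hlr : Real.log ((1 - l)/2) = Real.log (1 - l) - Real.log 2 :=
    Real.log_div (ne_of_gt h1l) two_ne_zero
  have : Hexp l * Real.log ((1 - l)/2) = -Real.log 2 := by
    rw [hlr, Hexp]
    field_simp
    ring
  rw [mul_comm] at this
  rw [this, Real.exp_neg, Real.exp_log (by norm_num : (0:ℝ) < 2)]
  norm_num

lemma div_r_rpow {l : ℝ} (hl : l ∈ Set.Ioo (0:ℝ) 1) {a : ℝ} (ha : 0 ≤ a) :
    (a / ((1 - l)/2)) ^ Hexp l = 2 * a ^ Hexp l := by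
  have h1l : (0:ℝ) < 1 - l := by linarith [hl.2]
  have hr : (0:ℝ) < (1 - l)/2 := by linarith
  rw [Real.div_rpow ha hr.le, r_rpow hl]
  ring

lemma keyIneq {l : ℝ} (hl : l ∈ Set.Ioo (0:ℝ) 1) {s t : ℝ} (hs : 0 ≤ s) (ht : 0 ≤ t)
    (hst : s + t + l ≤ 1) : s ^ Hexp l + t ^ Hexp l ≤ (s + t + l) ^ Hexp l := by
  have h1l : (0:ℝ) < 1 - l := by linarith [hl.2]
  have hr : (0:ℝ) < (1 - l)/2 := by linarith
  have hH := Hexp_pos hl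
  have conc := (Real.concaveOn_rpow hH.le (Hexp_le_one hl)).2 (Set.mem_Ici.2 hs)
    (Set.mem_Ici.2 ht) (by norm_num : (0:ℝ) ≤ 1/2) (by norm_num : (0:ℝ) ≤ 1/2) (by norm_num)
  simp only [smul_eq_mul] at conc
  have h2 : (1/2:ℝ) * s + (1/2) * t ≤ ((1 - l)/2) * (s + t + l) := by nlinarith [hl.1]
  have h3 : ((1/2:ℝ) * s + (1/2) * t) ^ Hexp l ≤ (((1 - l)/2) * (s + t + l)) ^ Hexp l :=
    Real.rpow_le_rpow (by linarith) h2 hH.le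
  have h4 : (((1 - l)/2) * (s + t + l)) ^ Hexp l = (1/2) * (s + t + l) ^ Hexp l := by
    rw [Real.mul_rpow hr.le (by nlinarith [hl.1] : (0:ℝ) ≤ s + t + l), r_rpow hl]
  linarith [conc, h3]

lemma cantorMap_eq {l : ℝ} (hl : l ∈ Set.Ioo (0:ℝ) 1) (g : ℝ → ℝ) (x : ℝ) :
    cantorMap l g x =
      if x < (1 - l)/2 then (1/2) * g (x / ((1 - l)/2))
      else if x < (1 + l)/2 then 1/2
      else 1/2 + (1/2) * g ((x - (1 + l)/2) / ((1 - l)/2)) := by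
  have h1l : (1:ℝ) - l ≠ 0 := by have := hl.2; intro h; simp only [sub_eq_zero] at h; linarith
  have e1 : 2/(1 - l) * x = x / ((1 - l)/2) := by field_simp
  have e2 : 2/(1 - l) * x - (1 + l)/(1 - l) = (x - (1 + l)/2) / ((1 - l)/2) := by
    field_simp
  rw [cantorMap, e2, e1]

lemma hSeq_succ {l : ℝ} (hl : l ∈ Set.Ioo (0:ℝ) 1) (n : ℕ) (x : ℝ) :
    hSeq l (n+1) x =
      if x < (1 - l)/2 then (1/2) * hSeq l n (x / ((1 - l)/2))
      else if x < (1 + l)/2 then 1/2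
      else 1/2 + (1/2) * hSeq l n ((x - (1 + l)/2) / ((1 - l)/2)) := by
  have : hSeq l (n+1) x = cantorMap l (hSeq l n) x := rfl
  rw [this, cantorMap_eq hl]

lemma hSeq_of_nonpos {l : ℝ} (hl : l ∈ Set.Ioo (0:ℝ) 1) (n : ℕ) {x : ℝ} (hx : x ≤ 0) :
    hSeq l n x = 0 := by
  induction n generalizing x with
  | zero =>
    show (if x < 1 then (0:ℝ) else 1) = 0
    rw [if_pos (by linarith)]
  | succ n ih =>
    have h1l : (0:ℝ) < 1 - l := by linarith [hl.2]
    have hr : (0:ℝ) < (1 - l)/2 := by linarith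
    rw [hSeq_succ hl, if_pos (by linarith), ih (div_nonpos_of_nonpos_of_nonneg hx hr.le)]
    ring

lemma hSeq_of_one_le {l : ℝ} (hl : l ∈ Set.Ioo (0:ℝ) 1) (n : ℕ) {x : ℝ} (hx : 1 ≤ x) :
    hSeq l n x = 1 := by
  induction n generalizing x with
  | zero =>
    show (if x < 1 then (0:ℝ) else 1) = 1
    rw [if_neg (by linarith)]
  | succ n ih =>
    have hl0 := hl.1
    have h1l : (0:ℝ) < 1 - l := by linarith [hl.2]
    have hr : (0:ℝ) < (1 - l)/2 := by linarith
    rw [hSeq_succ hl, if_neg (by push_neg; nlinarith), if_neg (by push_neg; nlinarith)]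
    rw [ih (by rw [le_div_iff₀ hr]; nlinarith)]
    ring

lemma hSeq_bounds {l : ℝ} (hl : l ∈ Set.Ioo (0:ℝ) 1) (n : ℕ) (x : ℝ) :
    0 ≤ hSeq l n x ∧ hSeq l n x ≤ 1 := by
  induction n generalizing x with
  | zero =>
    show 0 ≤ (if x < 1 then (0:ℝ) else 1) ∧ (if x < 1 then (0:ℝ) else 1) ≤ 1
    split_ifs <;> norm_num
  | succ n ih =>
    rw [hSeq_succ hl]
    split_ifs with h1 h2
    · have := ih (x / ((1 - l)/2)); constructor <;> [linarith; linarith]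
    · norm_num
    · have := ih ((x - (1 + l)/2) / ((1 - l)/2)); constructor <;> [linarith; linarith]

lemma hSeq_mono {l : ℝ} (hl : l ∈ Set.Ioo (0:ℝ) 1) (n : ℕ) : Monotone (hSeq l n) := by
  induction n with
  | zero =>
    intro x y hxy
    show (if x < 1 then (0:ℝ) else 1) ≤ (if y < 1 then (0:ℝ) else 1)
    split_ifs <;> norm_num <;> linarith
  | succ n ih =>
    intro x y hxy
    have hl0 := hl.1
    have h1l : (0:ℝ) < 1 - l := by linarith [hl.2]
    have hr : (0:ℝ) < (1 - l)/2 := by linarith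
    rw [hSeq_succ hl, hSeq_succ hl]
    by_cases hyr : y < (1 - l)/2
    · rw [if_pos (lt_of_le_of_lt hxy hyr), if_pos hyr]
      have := ih (by gcongr : x / ((1 - l)/2) ≤ y / ((1 - l)/2))
      linarith
    · rw [if_neg hyr]
      by_cases hym : y < (1 + l)/2
      · rw [if_pos hym]
        by_cases hxr : x < (1 - l)/2
        · rw [if_pos hxr]
          have := (hSeq_bounds hl n (x / ((1 - l)/2))).2
          linarith
        · rw [if_neg hxr, if_pos (lt_of_le_of_lt hxy hym)]
      · rw [if_neg hym]
        by_cases hxr : x < (1 - l)/2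
        · rw [if_pos hxr]
          have h1 := (hSeq_bounds hl n (x / ((1 - l)/2))).2
          have h2 := (hSeq_bounds hl n ((y - (1 + l)/2) / ((1 - l)/2))).1
          linarith
        · rw [if_neg hxr]
          by_cases hxm : x < (1 + l)/2
          · rw [if_pos hxm]
            have h2 := (hSeq_bounds hl n ((y - (1 + l)/2) / ((1 - l)/2))).1
            linarith
          · rw [if_neg hxm]
            have := ih (by gcongr :
              (x - (1 + l)/2) / ((1 - l)/2) ≤ (y - (1 + l)/2) / ((1 - l)/2))
            linarith

lemma hSeq_le_rpow {l : ℝ} (hl : l ∈ Set.Ioo (0:ℝ) 1) (n : ℕ) {x : ℝ} (hx : 0 ≤ x) :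
    hSeq l n x ≤ x ^ Hexp l := by
  have hl0 := hl.1
  have h1l : (0:ℝ) < 1 - l := by linarith [hl.2]
  have hr : (0:ℝ) < (1 - l)/2 := by linarith
  have hH := Hexp_pos hl
  induction n generalizing x with
  | zero =>
    show (if x < 1 then (0:ℝ) else 1) ≤ x ^ Hexp l
    split_ifs with h
    · exact Real.rpow_nonneg hx _
    · exact Real.one_le_rpow (by linarith) hH.le
  | succ n ih =>
    rw [hSeq_succ hl]
    split_ifs with h1 h2
    · have := @ih (x / ((1 - l)/2)) (by positivity)
      have e := div_r_rpow hl hx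
      linarith
    · -- (1-l)/2 ≤ x : 1/2 = r^H ≤ x^H
      have : ((1 - l)/2) ^ Hexp l ≤ x ^ Hexp l :=
        Real.rpow_le_rpow hr.le (by linarith) hH.le
      rw [r_rpow hl] at this
      linarith
    · -- (1+l)/2 ≤ x
      push_neg at h1 h2
      by_cases hx1 : 1 ≤ x
      · have hb := (hSeq_bounds hl n ((x - (1 + l)/2) / ((1 - l)/2))).2
        have : (1:ℝ) ≤ x ^ Hexp l := Real.one_le_rpow hx1 hH.le
        linarith
      · push_neg at hx1
        set t := x - (1 + l)/2 with ht
        have ht0 : 0 ≤ t := by simp [ht]; linarith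
        have htr : t ≤ (1 - l)/2 := by simp [ht]; linarith
        have ihu := @ih (t / ((1 - l)/2)) (by positivity)
        have e := div_r_rpow hl ht0
        have key := keyIneq hl hr.le ht0
          (by nlinarith : (1 - l)/2 + t + l ≤ 1)
        have hrH := r_rpow hl
        have hxe : (1 - l)/2 + t + l = x := by simp [ht]; ring
        rw [hxe] at key
        -- goal : 1/2 + 1/2 * hSeq l n (t / ((1-l)/2)) ≤ x ^ Hexp l
        -- key : ((1-l)/2)^H + t^H ≤ x^H ; hrH : ((1-l)/2)^H = 1/2; e : (t/r)^H = 2 t^H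
        linarith

lemma hSeq_incr {l : ℝ} (hl : l ∈ Set.Ioo (0:ℝ) 1) :
    ∀ (n : ℕ) (x y : ℝ), x ≤ y →
      hSeq l n y - hSeq l n x ≤ (y - x) ^ Hexp l + (1/2)^n := by
  have hl0 := hl.1
  have h1l : (0:ℝ) < 1 - l := by linarith [hl.2]
  have hr : (0:ℝ) < (1 - l)/2 := by linarith
  have hH := Hexp_pos hl
  intro n
  induction n with
  | zero =>
    intro x y hxy
    have h0 : (0:ℝ) ≤ (y - x) ^ Hexp l := Real.rpow_nonneg (by linarith) _
    have b1 := hSeq_bounds hl 0 x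
    have b2 := hSeq_bounds hl 0 y
    norm_num
    linarith
  | succ n ih =>
    intro x y hxy
    have hp : ((1:ℝ)/2)^(n+1) = (1/2)^n * (1/2) := pow_succ _ _
    have hyx0 : (0:ℝ) ≤ y - x := by linarith
    have hrow : (0:ℝ) ≤ (y - x) ^ Hexp l := Real.rpow_nonneg hyx0 _
    rw [hSeq_succ hl, hSeq_succ hl]
    by_cases hyr : y < (1 - l)/2
    · rw [if_pos (lt_of_le_of_lt hxy hyr), if_pos hyr]
      have key := ih (x / ((1 - l)/2)) (y / ((1 - l)/2)) (by gcongr)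
      have e0 : y / ((1 - l)/2) - x / ((1 - l)/2) = (y - x) / ((1 - l)/2) := by ring
      rw [e0, div_r_rpow hl hyx0] at key
      linarith
    · rw [if_neg hyr]
      push_neg at hyr
      by_cases hym : y < (1 + l)/2
      · rw [if_pos hym]
        by_cases hxr : x < (1 - l)/2
        · rw [if_pos hxr]
          set a := x / ((1 - l)/2) with hadef
          set a0 := max a 0 with ha0def
          have ha' : hSeq l n a = hSeq l n a0 := by
            rcases le_total 0 a with h | h
            · rw [ha0def, max_eq_left h]
            · rw [ha0def, max_eq_right h, hSeq_of_nonpos hl n h, hSeq_of_nonpos hl n le_rfl]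
          have ha1 : a < 1 := by rw [hadef, div_lt_one hr]; linarith
          have k1 := ih a0 1 (max_le ha1.le zero_le_one)
          rw [hSeq_of_one_le hl n le_rfl] at k1
          have ea0 : a0 = (max x 0) / ((1 - l)/2) := by
            rcases le_total x 0 with h | h
            · rw [ha0def, hadef, max_eq_right h,
                max_eq_right (div_nonpos_of_nonpos_of_nonneg h hr.le), zero_div]
            · rw [ha0def, hadef, max_eq_left h, max_eq_left (div_nonneg h hr.le)]
          set s := (1 - l)/2 - max x 0 with hsdef
          have hmx : max x 0 ≤ (1 - l)/2 := (max_lt hxr hr).le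
          have hs0 : (0:ℝ) ≤ s := by rw [hsdef]; linarith
          have e1 : 1 - a0 = s / ((1 - l)/2) := by
            rw [ea0, hsdef]; field_simp
          have es : (s / ((1 - l)/2)) ^ Hexp l = 2 * s ^ Hexp l := div_r_rpow hl hs0
          have k1' : 1 - hSeq l n a0 ≤ 2 * s ^ Hexp l + (1/2)^n := by
            rw [e1, es] at k1; linarith
          have hsle : s ≤ y - x := by
            have := le_max_left x 0
            rw [hsdef]; linarith
          have mono := Real.rpow_le_rpow hs0 hsle hH.le
          linarith
        · rw [if_neg hxr, if_pos (lt_of_le_of_lt hxy hym)]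
          have : (0:ℝ) < (1/2)^(n+1) := by positivity
          linarith
      · rw [if_neg hym]
        push_neg at hym
        by_cases hxr : x < (1 - l)/2
        · -- hardest case : x in first branch, y in third branch
          rw [if_pos hxr]
          set a := x / ((1 - l)/2) with hadef
          set a0 := max a 0 with ha0def
          set u := (y - (1 + l)/2) / ((1 - l)/2) with hudef
          set u0 := min u 1 with hu0def
          have ha' : hSeq l n a = hSeq l n a0 := by
            rcases le_total 0 a with h | h
            · rw [ha0def, max_eq_left h]
            · rw [ha0def, max_eq_right h, hSeq_of_nonpos hl n h, hSeq_of_nonpos hl n le_rfl]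
          have hu' : hSeq l n u = hSeq l n u0 := by
            rcases le_total u 1 with h | h
            · rw [hu0def, min_eq_left h]
            · rw [hu0def, min_eq_right h, hSeq_of_one_le hl n h, hSeq_of_one_le hl n le_rfl]
          have ha1 : a < 1 := by rw [hadef, div_lt_one hr]; linarith
          have k1 := ih a0 1 (max_le ha1.le zero_le_one)
          rw [hSeq_of_one_le hl n le_rfl] at k1
          have hu00 : (0:ℝ) ≤ u0 :=
            le_min (div_nonneg (by linarith) hr.le) zero_le_one
          have k2 := hSeq_le_rpow hl n hu00
          have ea0 : a0 = (max x 0) / ((1 - l)/2) := by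
            rcases le_total x 0 with h | h
            · rw [ha0def, hadef, max_eq_right h,
                max_eq_right (div_nonpos_of_nonpos_of_nonneg h hr.le), zero_div]
            · rw [ha0def, hadef, max_eq_left h, max_eq_left (div_nonneg h hr.le)]
          set s := (1 - l)/2 - max x 0 with hsdef
          set t := min (y - (1 + l)/2) ((1 - l)/2) with htdef
          have hmx : max x 0 ≤ (1 - l)/2 := (max_lt hxr hr).le
          have hs0 : (0:ℝ) ≤ s := by rw [hsdef]; linarith
          have ht0 : (0:ℝ) ≤ t := le_min (by linarith) hr.le
          have e1 : 1 - a0 = s / ((1 - l)/2) := by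
            rw [ea0, hsdef]; field_simp
          have eu0 : u0 = t / ((1 - l)/2) := by
            rcases le_total (y - (1 + l)/2) ((1 - l)/2) with h | h
            · rw [hu0def, htdef, min_eq_left h, hudef,
                min_eq_left (by rw [div_le_one hr]; exact h)]
            · rw [hu0def, htdef, min_eq_right h, div_self hr.ne',
                min_eq_right (by rw [hudef, le_div_iff₀ hr]; linarith)]
          have es : (s / ((1 - l)/2)) ^ Hexp l = 2 * s ^ Hexp l := div_r_rpow hl hs0
          have et : (t / ((1 - l)/2)) ^ Hexp l = 2 * t ^ Hexp l := div_r_rpow hl ht0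
          have k1' : 1 - hSeq l n a0 ≤ 2 * s ^ Hexp l + (1/2)^n := by
            rw [e1, es] at k1; linarith
          have k2' : hSeq l n u0 ≤ 2 * t ^ Hexp l := by
            calc hSeq l n u0 ≤ u0 ^ Hexp l := k2
              _ = 2 * t ^ Hexp l := by rw [eu0, et]
          have hst : s + t + l ≤ 1 := by
            have h1 := min_le_right (y - (1 + l)/2) ((1 - l)/2)
            have h2 := le_max_right x 0
            rw [hsdef, htdef] at *
            linarith [le_max_right x 0]
          have key := keyIneq hl hs0 ht0 hst
          have hsum : s + t + l ≤ y - x := by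
            have h1 := min_le_left (y - (1 + l)/2) ((1 - l)/2)
            have h2 := le_max_left x 0
            rw [hsdef, htdef] at *
            linarith
          have mono := Real.rpow_le_rpow (by linarith : (0:ℝ) ≤ s + t + l) hsum hH.le
          linarith
        · rw [if_neg hxr]
          by_cases hxm : x < (1 + l)/2
          · rw [if_pos hxm]
            set u := (y - (1 + l)/2) / ((1 - l)/2) with hudef
            set u0 := min u 1 with hu0def
            have hu' : hSeq l n u = hSeq l n u0 := by
              rcases le_total u 1 with h | h
              · rw [hu0def, min_eq_left h]
              · rw [hu0def, min_eq_right h, hSeq_of_one_le hl n h, hSeq_of_one_le hl n le_rfl]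
            have hu00 : (0:ℝ) ≤ u0 :=
              le_min (div_nonneg (by linarith) hr.le) zero_le_one
            have k2 := hSeq_le_rpow hl n hu00
            set t := min (y - (1 + l)/2) ((1 - l)/2) with htdef
            have ht0 : (0:ℝ) ≤ t := le_min (by linarith) hr.le
            have eu0 : u0 = t / ((1 - l)/2) := by
              rcases le_total (y - (1 + l)/2) ((1 - l)/2) with h | h
              · rw [hu0def, htdef, min_eq_left h, hudef,
                  min_eq_left (by rw [div_le_one hr]; exact h)]
              · rw [hu0def, htdef, min_eq_right h, div_self hr.ne',
                  min_eq_right (by rw [hudef, le_div_iff₀ hr]; linarith)]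
            have et : (t / ((1 - l)/2)) ^ Hexp l = 2 * t ^ Hexp l := div_r_rpow hl ht0
            have k2' : hSeq l n u0 ≤ 2 * t ^ Hexp l := by
              calc hSeq l n u0 ≤ u0 ^ Hexp l := k2
                _ = 2 * t ^ Hexp l := by rw [eu0, et]
            have htle : t ≤ y - x := by
              have h1 := min_le_left (y - (1 + l)/2) ((1 - l)/2)
              rw [htdef] at *
              linarith
            have mono := Real.rpow_le_rpow ht0 htle hH.le
            have : (0:ℝ) < (1/2)^(n+1) := by positivity
            linarith
          · rw [if_neg hxm]
            have key := ih ((x - (1 + l)/2) / ((1 - l)/2)) ((y - (1 + l)/2) / ((1 - l)/2))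
              (by gcongr)
            have e0 : (y - (1 + l)/2) / ((1 - l)/2) - (x - (1 + l)/2) / ((1 - l)/2)
                = (y - x) / ((1 - l)/2) := by ring
            rw [e0, div_r_rpow hl hyx0] at key
            linarith

lemma extendUnit_of_neg {g : ℝ → ℝ} {x : ℝ} (h : x < 0) : extendUnit g x = 0 := by
  simp only [extendUnit]; rw [if_pos h]

lemma extendUnit_of_mem {g : ℝ → ℝ} {x : ℝ} (h0 : 0 ≤ x) (h1 : x ≤ 1) :
    extendUnit g x = g x := by
  simp only [extendUnit]; rw [if_neg (not_lt.2 h0), if_pos h1]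

lemma extendUnit_of_gt {g : ℝ → ℝ} {x : ℝ} (h : 1 < x) : extendUnit g x = 1 := by
  simp only [extendUnit]; rw [if_neg (by linarith), if_neg (by linarith)]

lemma extend_seq_dist {l : ℝ} (hl : l ∈ Set.Ioo (0:ℝ) 1) (n : ℕ) (x : ℝ) :
    |extendUnit (cantorSeq l (fun _ => 0) n) x - hSeq l n x| ≤ (1/2)^n := by
  have hl0 := hl.1
  have h1l : (0:ℝ) < 1 - l := by linarith [hl.2]
  have hr : (0:ℝ) < (1 - l)/2 := by linarith
  induction n generalizing x with
  | zero =>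
    have e1 : hSeq l 0 x = if x < 1 then 0 else 1 := rfl
    have e2 : cantorSeq l (fun _ => (0:ℝ)) 0 x = 0 := rfl
    simp only [extendUnit, e2]
    rw [e1]
    norm_num
    split_ifs <;> norm_num
  | succ n ih =>
    have hp : ((1:ℝ)/2)^(n+1) = (1/2)^n * (1/2) := pow_succ _ _
    rw [hSeq_succ hl]
    by_cases hx0 : x < 0
    · rw [extendUnit_of_neg hx0, if_pos (by linarith : x < (1 - l)/2)]
      have harg : x / ((1 - l)/2) < 0 := div_neg_of_neg_of_pos hx0 hr
      have ih' := ih (x / ((1 - l)/2))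
      rw [extendUnit_of_neg harg] at ih'
      rw [abs_le] at ih' ⊢
      constructor <;> [linarith; linarith]
    · push_neg at hx0
      by_cases hx1 : x ≤ 1
      · rw [extendUnit_of_mem hx0 hx1]
        have e : cantorSeq l (fun _ => (0:ℝ)) (n+1) x
            = cantorMap l (cantorSeq l (fun _ => 0) n) x := rfl
        rw [e, cantorMap_eq hl]
        split_ifs with h1 h2
        · have harg0 : 0 ≤ x / ((1 - l)/2) := div_nonneg hx0 hr.le
          have harg1 : x / ((1 - l)/2) ≤ 1 := by rw [div_le_one hr]; linarith
          have ih' := ih (x / ((1 - l)/2))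
          rw [extendUnit_of_mem harg0 harg1] at ih'
          rw [abs_le] at ih' ⊢
          constructor <;> [linarith; linarith]
        · simp only [sub_self, abs_zero]
          positivity
        · push_neg at h1 h2
          have harg0 : 0 ≤ (x - (1 + l)/2) / ((1 - l)/2) := div_nonneg (by linarith) hr.le
          have harg1 : (x - (1 + l)/2) / ((1 - l)/2) ≤ 1 := by
            rw [div_le_one hr]; linarith
          have ih' := ih ((x - (1 + l)/2) / ((1 - l)/2))
          rw [extendUnit_of_mem harg0 harg1] at ih'
          rw [abs_le] at ih' ⊢
          constructor <;> [linarith; linarith]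
      · push_neg at hx1
        rw [extendUnit_of_gt hx1, if_neg (by push_neg; nlinarith),
          if_neg (by push_neg; nlinarith)]
        have harg : 1 < (x - (1 + l)/2) / ((1 - l)/2) := by
          rw [lt_div_iff₀ hr]; linarith
        have ih' := ih ((x - (1 + l)/2) / ((1 - l)/2))
        rw [extendUnit_of_gt harg] at ih'
        rw [abs_le] at ih' ⊢
        constructor <;> [linarith; linarith]

lemma c_abs_le_one {l : ℝ} (hl : l ∈ Set.Ioo (0:ℝ) 1) {c : ℝ → ℝ}
    (hcb : ∃ M, ∀ x ∈ Set.Icc (0 : ℝ) 1, |c x| ≤ M)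
    (hc : ∀ x ∈ Set.Icc (0 : ℝ) 1, c x = cantorMap l c x) :
    ∀ x ∈ Set.Icc (0:ℝ) 1, |c x| ≤ 1 := by
  have hl0 := hl.1
  have h1l : (0:ℝ) < 1 - l := by linarith [hl.2]
  have hr : (0:ℝ) < (1 - l)/2 := by linarith
  obtain ⟨M, hM⟩ := hcb
  set m := max M 0 with hmdef
  have hm0 : 0 ≤ m := le_max_right _ _
  have key : ∀ k : ℕ, ∀ x ∈ Set.Icc (0:ℝ) 1, |c x| ≤ 1 + m / 2^k := by
    intro k
    induction k with
    | zero =>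
      intro x hx
      have h1 := hM x hx
      have h2 : M ≤ m := le_max_left _ _
      norm_num
      linarith
    | succ k ihk =>
      intro x hx
      have hdiv : m / 2^(k+1) = m / 2^k / 2 := by rw [pow_succ]; ring
      have h2k : (0:ℝ) < 2^k := by positivity
      have hdk : (0:ℝ) ≤ m / 2^(k+1) := div_nonneg hm0 (by positivity)
      rw [hc x hx, cantorMap_eq hl]
      split_ifs with h1 h2
      · have harg : x / ((1 - l)/2) ∈ Set.Icc (0:ℝ) 1 :=
          ⟨div_nonneg hx.1 hr.le, by rw [div_le_one hr]; linarith [hx.2]⟩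
        have ihx := ihk _ harg
        rw [abs_le] at ihx ⊢
        constructor <;> [nlinarith; nlinarith]
      · rw [abs_le]; constructor <;> [linarith; linarith]
      · have harg : (x - (1 + l)/2) / ((1 - l)/2) ∈ Set.Icc (0:ℝ) 1 := by
          constructor
          · apply div_nonneg _ hr.le; push_neg at h2; linarith
          · rw [div_le_one hr]; linarith [hx.2]
        have ihx := ihk _ harg
        rw [abs_le] at ihx ⊢
        constructor <;> [nlinarith; nlinarith]
  intro x hx
  by_contra hcon
  push_neg at hcon
  have hd : 0 < |c x| - 1 := by linarith
  obtain ⟨k, hk⟩ := pow_unbounded_of_one_lt (m / (|c x| - 1)) (by norm_num : (1:ℝ) < 2)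
  have h2k : (0:ℝ) < 2^k := by positivity
  have hmk : m < (|c x| - 1) * 2^k := by
    rw [div_lt_iff₀ hd] at hk; linarith
  have hlt : m / 2^k < |c x| - 1 := by rw [div_lt_iff₀ h2k]; linarith
  have := key k x hx
  linarith

lemma extend_c_dist {l : ℝ} (hl : l ∈ Set.Ioo (0:ℝ) 1) {c : ℝ → ℝ}
    (hc1 : ∀ x ∈ Set.Icc (0:ℝ) 1, |c x| ≤ 1)
    (hc : ∀ x ∈ Set.Icc (0 : ℝ) 1, c x = cantorMap l c x) (n : ℕ) (x : ℝ) :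
    |extendUnit c x - extendUnit (cantorSeq l (fun _ => 0) n) x| ≤ (1/2)^n := by
  have hl0 := hl.1
  have h1l : (0:ℝ) < 1 - l := by linarith [hl.2]
  have hr : (0:ℝ) < (1 - l)/2 := by linarith
  induction n generalizing x with
  | zero =>
    by_cases hx0 : x < 0
    · rw [extendUnit_of_neg hx0, extendUnit_of_neg hx0]; norm_num
    · push_neg at hx0
      by_cases hx1 : x ≤ 1
      · rw [extendUnit_of_mem hx0 hx1, extendUnit_of_mem hx0 hx1]
        have e : cantorSeq l (fun _ => (0:ℝ)) 0 x = 0 := rfl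
        rw [e, sub_zero]
        simpa using hc1 x ⟨hx0, hx1⟩
      · push_neg at hx1
        rw [extendUnit_of_gt hx1, extendUnit_of_gt hx1]; norm_num
  | succ n ih =>
    have hp : ((1:ℝ)/2)^(n+1) = (1/2)^n * (1/2) := pow_succ _ _
    by_cases hx0 : x < 0
    · rw [extendUnit_of_neg hx0, extendUnit_of_neg hx0]; norm_num
    · push_neg at hx0
      by_cases hx1 : x ≤ 1
      · rw [extendUnit_of_mem hx0 hx1, extendUnit_of_mem hx0 hx1]
        have e : cantorSeq l (fun _ => (0:ℝ)) (n+1) x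
            = cantorMap l (cantorSeq l (fun _ => 0) n) x := rfl
        rw [e, hc x ⟨hx0, hx1⟩, cantorMap_eq hl, cantorMap_eq hl]
        split_ifs with h1 h2
        · have harg0 : 0 ≤ x / ((1 - l)/2) := div_nonneg hx0 hr.le
          have harg1 : x / ((1 - l)/2) ≤ 1 := by rw [div_le_one hr]; linarith
          have ih' := ih (x / ((1 - l)/2))
          rw [extendUnit_of_mem harg0 harg1, extendUnit_of_mem harg0 harg1] at ih'
          rw [abs_le] at ih' ⊢
          constructor <;> [linarith; linarith]
        · simp only [sub_self, abs_zero]; positivity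
        · push_neg at h1 h2
          have harg0 : 0 ≤ (x - (1 + l)/2) / ((1 - l)/2) := div_nonneg (by linarith) hr.le
          have harg1 : (x - (1 + l)/2) / ((1 - l)/2) ≤ 1 := by rw [div_le_one hr]; linarith
          have ih' := ih ((x - (1 + l)/2) / ((1 - l)/2))
          rw [extendUnit_of_mem harg0 harg1, extendUnit_of_mem harg0 harg1] at ih'
          rw [abs_le] at ih' ⊢
          constructor <;> [linarith; linarith]
      · push_neg at hx1
        rw [extendUnit_of_gt hx1, extendUnit_of_gt hx1]; norm_num

/-- For the extended middle-λ Cantor function `c̄` and the extended iterates `c̄ₙ`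
started from `c₀ = 0` on `[0,1]`:
`|c̄ x - c̄ₙ y| ≤ |x - y| ^ H_λ + 2^(-n+2)` for all `x, y ∈ ℝ` and `n ∈ ℕ`. -/
theorem extendedCantor_iterate_bound (l : ℝ) (hl : l ∈ Set.Ioo (0 : ℝ) 1)
    (c : ℝ → ℝ)
    (hcb : ∃ M, ∀ x ∈ Set.Icc (0 : ℝ) 1, |c x| ≤ M)
    (hc : ∀ x ∈ Set.Icc (0 : ℝ) 1, c x = cantorMap l c x) :
    ∀ x y : ℝ, ∀ n : ℕ,
      |extendUnit c x - extendUnit (cantorSeq l (fun _ => 0) n) y|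
        ≤ |x - y| ^ (Real.log 2 / (Real.log 2 - Real.log (1 - l)))
            + (2 : ℝ) ^ ((2 : ℤ) - (n : ℤ)) := by
  intro x y n
  have hc1 := c_abs_le_one hl hcb hc
  have d1 := extend_c_dist hl hc1 hc n x
  have d2 := extend_seq_dist hl n x
  have d4 := extend_seq_dist hl n y
  have hHdef : Hexp l = Real.log 2 / (Real.log 2 - Real.log (1 - l)) := rfl
  have d3 : |hSeq l n x - hSeq l n y| ≤ |x - y| ^ Hexp l + (1/2)^n := by
    rcases le_total x y with h | h
    · have hmono := hSeq_mono hl n h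
      have hincr := hSeq_incr hl n x y h
      rw [abs_sub_comm (hSeq l n x) (hSeq l n y), abs_of_nonneg (by linarith),
        abs_sub_comm x y, abs_of_nonneg (by linarith : (0:ℝ) ≤ y - x)]
      exact hincr
    · have hmono := hSeq_mono hl n h
      have hincr := hSeq_incr hl n y x h
      rw [abs_of_nonneg (by linarith), abs_of_nonneg (by linarith : (0:ℝ) ≤ x - y)]
      exact hincr
  set A := extendUnit c x
  set B := extendUnit (cantorSeq l (fun _ => 0) n) x
  set C := hSeq l n x
  set D := hSeq l n y
  set E := extendUnit (cantorSeq l (fun _ => 0) n) y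
  have t1 : |A - E| ≤ |A - B| + |B - C| + |C - D| + |D - E| := by
    calc |A - E| ≤ |A - D| + |D - E| := abs_sub_le _ _ _
      _ ≤ (|A - C| + |C - D|) + |D - E| := by linarith [abs_sub_le A C D]
      _ ≤ ((|A - B| + |B - C|) + |C - D|) + |D - E| := by linarith [abs_sub_le A B C]
      _ = |A - B| + |B - C| + |C - D| + |D - E| := by ring
  have hDE : |D - E| ≤ (1/2)^n := by rw [abs_sub_comm]; exact d4
  have e4 : (2:ℝ)^((2:ℤ) - (n:ℤ)) = 4 * (1/2)^n := by
    rw [zpow_sub₀ (two_ne_zero), zpow_natCast]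
    norm_num
    rw [div_eq_mul_inv, ← inv_pow]
    norm_num
  rw [← hHdef, e4]
  linarith
end
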